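/- Let π be an irreducible complex representation of the Heisenberg group H on W (so dim W = q^n) with nontrivial central character, and let ω be an oscillator representation for π. Then W is the direct sum of the (+1)-eigenspace and the (−1)-eigenspace of ω(−I_{2n}), each of these two eigenspaces is an irreducible subrepresentation of ω as a representation of Sp_{2n}(F_q), and their dimensions are (q^n + 1)/2 and (q^n − 1)/2 in some order. In particular, ω has exactly two irreducible constituents, each occurring with multiplicity one. -/

import Mathlib

open Matrix
open scoped Kronecker

/-- The subgroup of invertible matrices `g` preserving the bilinear form with
matrix `M`, i.e. satisfying `gᵀ * M * g = M`. -/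
def matIsom (F : Type) [Field F] (ι : Type) [Fintype ι] [DecidableEq ι]
    (M : Matrix ι ι F) : Subgroup (Matrix ι ι F)ˣ where
  carrier := {g | (g : Matrix ι ι F)ᵀ * M * g = M}
  one_mem' := by simp
  mul_mem' := by
    intro a b ha hb
    simp only [Set.mem_setOf_eq, Units.val_mul, transpose_mul] at *
    calc (b : Matrix ι ι F)ᵀ * (a : Matrix ι ι F)ᵀ * M * ((a : Matrix ι ι F) * b)
        = (b : Matrix ι ι F)ᵀ * ((a : Matrix ι ι F)ᵀ * M * a) * b := by
          simp only [Matrix.mul_assoc]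
      _ = M := by rw [ha, hb]
  inv_mem' := by
    intro a ha
    simp only [Set.mem_setOf_eq] at *
    set b : Matrix ι ι F := ↑a⁻¹ with hb
    have h1 : (a : Matrix ι ι F) * b = 1 := by
      rw [hb, ← Units.val_mul, mul_inv_cancel, Units.val_one]
    calc bᵀ * M * b = bᵀ * ((a : Matrix ι ι F)ᵀ * M * a) * b := by rw [ha]
      _ = ((a : Matrix ι ι F) * b)ᵀ * M * ((a : Matrix ι ι F) * b) := by
          simp only [transpose_mul, Matrix.mul_assoc]
      _ = M := by rw [h1]; simp

/-- The matrix of the standard symplectic form on `F^(2n)`. -/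
def Jmat (F : Type) [Field F] (n : ℕ) : Matrix (Fin n ⊕ Fin n) (Fin n ⊕ Fin n) F :=
  fromBlocks 0 1 (-1) 0

/-- The symplectic group `Sp_{2n}(F)`: matrices with `gᵀ J g = J`. -/
abbrev Sp (F : Type) [Field F] (n : ℕ) : Subgroup (Matrix (Fin n ⊕ Fin n) (Fin n ⊕ Fin n) F)ˣ :=
  matIsom F (Fin n ⊕ Fin n) (Jmat F n)

/-- The invertible matrix `[[1, A], [0, 1]]`. -/
def shearUnit (F : Type) [Field F] (n : ℕ) (A : Matrix (Fin n) (Fin n) F) :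
    (Matrix (Fin n ⊕ Fin n) (Fin n ⊕ Fin n) F)ˣ where
  val := fromBlocks 1 A 0 1
  inv := fromBlocks 1 (-A) 0 1
  val_inv := by
    rw [fromBlocks_multiply, ← fromBlocks_one (l := Fin n) (m := Fin n)]
    simp
  inv_val := by
    rw [fromBlocks_multiply, ← fromBlocks_one (l := Fin n) (m := Fin n)]
    simp

lemma shearUnit_mem (F : Type) [Field F] (n : ℕ) (A : Matrix (Fin n) (Fin n) F)
    (hA : A.IsSymm) : shearUnit F n A ∈ Sp F n := by
  show (fromBlocks 1 A 0 1 : Matrix (Fin n ⊕ Fin n) (Fin n ⊕ Fin n) F)ᵀ * Jmat F n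
      * fromBlocks 1 A 0 1 = Jmat F n
  have := hA.eq
  simp [Jmat, fromBlocks_transpose, fromBlocks_multiply, this]

/-- The element `n_A = [[1, A], [0, 1]]` of the Siegel unipotent radical of `Sp_{2n}(F)`,
for a symmetric matrix `A`. -/
def nUnip (F : Type) [Field F] (n : ℕ) (A : Matrix (Fin n) (Fin n) F) (hA : A.IsSymm) :
    ↥(Sp F n) :=
  ⟨shearUnit F n A, shearUnit_mem F n A hA⟩

/-- A representation is irreducible if the space is nonzero and the only invariant
subspaces are `⊥` and `⊤`. -/
def IsIrredRep {G : Type} [Monoid G] {W : Type} [AddCommGroup W] [Module ℂ W]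
    (ρ : Representation ℂ G W) : Prop :=
  Nontrivial W ∧ ∀ p : Submodule ℂ W, (∀ g : G, ∀ w ∈ p, ρ g w ∈ p) → p = ⊥ ∨ p = ⊤

/-- Isomorphism of representations. -/
def RepIso {G : Type} [Monoid G] {W₁ W₂ : Type} [AddCommGroup W₁] [Module ℂ W₁]
    [AddCommGroup W₂] [Module ℂ W₂]
    (ρ₁ : Representation ℂ G W₁) (ρ₂ : Representation ℂ G W₂) : Prop :=
  ∃ e : W₁ ≃ₗ[ℂ] W₂, ∀ (g : G) (w : W₁), e (ρ₁ g w) = ρ₂ g (e w)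

/-- The multiplicity `m_B(ρ)` of the character `ψ_B : n_A ↦ ψ(Tr(B * A))` of the Siegel
unipotent radical `N` in the restriction of `ρ` to `N`. -/
noncomputable def multB {F : Type} [Field F] {n : ℕ} {W : Type} [AddCommGroup W] [Module ℂ W]
    (ρ : Representation ℂ (↥(Sp F n)) W) (ψ : AddChar F ℂ) (B : Matrix (Fin n) (Fin n) F) : ℕ :=
  Module.finrank ℂ
    ↥(⨅ A : {A : Matrix (Fin n) (Fin n) F // A.IsSymm},
      Module.End.eigenspace (ρ (nUnip F n A.1 A.2)) (ψ (Matrix.trace (B * A.1))))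

/-- Congruence of matrices: `B'` is obtained from `B` by the change-of-basis action of
an invertible matrix. -/
def Congruent' {F : Type} [Field F] {n : ℕ} (B B' : Matrix (Fin n) (Fin n) F) : Prop :=
  ∃ C : (Matrix (Fin n) (Fin n) F)ˣ, B' = (C : Matrix (Fin n) (Fin n) F)ᵀ * B * C

/-- A bundled complex representation of `G` (on an arbitrary complex vector space). -/
structure CRep (G : Type) [Monoid G] : Type 1 where
  carrier : Type
  [acg : AddCommGroup carrier]
  [mod : Module ℂ carrier]
  ρ : Representation ℂ G carrier

attribute [instance] CRep.acg CRep.mod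

/-- The Heisenberg group attached to the bilinear form with matrix `M` on `ι → F`:
the set `(ι → F) × F` with the Heisenberg multiplication. -/
def Heis (F : Type) [Field F] (ι : Type) [Fintype ι] (M : Matrix ι ι F) : Type :=
  (ι → F) × F

namespace Heis

variable {F : Type} [Field F] {ι : Type} [Fintype ι] {M : Matrix ι ι F}

instance : Group (Heis F ι M) where
  mul a b := (a.1 + b.1, a.2 + b.2 + (2 : F)⁻¹ * (a.1 ⬝ᵥ (M *ᵥ b.1)))
  one := ((0 : ι → F), (0 : F))
  inv a := (-a.1, -a.2 + (2 : F)⁻¹ * (a.1 ⬝ᵥ (M *ᵥ a.1)))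
  mul_assoc a b c := by
    refine Prod.ext ?_ ?_
    · show (a.1 + b.1) + c.1 = a.1 + (b.1 + c.1)
      rw [add_assoc]
    · show a.2 + b.2 + 2⁻¹ * (a.1 ⬝ᵥ M *ᵥ b.1) + c.2
          + 2⁻¹ * ((a.1 + b.1) ⬝ᵥ M *ᵥ c.1)
        = a.2 + (b.2 + c.2 + 2⁻¹ * (b.1 ⬝ᵥ M *ᵥ c.1))
          + 2⁻¹ * (a.1 ⬝ᵥ M *ᵥ (b.1 + c.1))
      simp only [add_dotProduct, Matrix.mulVec_add, dotProduct_add]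
      ring
  one_mul a := by
    refine Prod.ext ?_ ?_
    · show (0 : ι → F) + a.1 = a.1
      simp
    · show 0 + a.2 + 2⁻¹ * ((0 : ι → F) ⬝ᵥ M *ᵥ a.1) = a.2
      simp
  mul_one a := by
    refine Prod.ext ?_ ?_
    · show a.1 + (0 : ι → F) = a.1
      simp
    · show a.2 + 0 + 2⁻¹ * (a.1 ⬝ᵥ M *ᵥ (0 : ι → F)) = a.2
      simp
  inv_mul_cancel a := by
    refine Prod.ext ?_ ?_
    · show -a.1 + a.1 = (0 : ι → F)
      simp
    · show -a.2 + 2⁻¹ * (a.1 ⬝ᵥ M *ᵥ a.1) + a.2 + 2⁻¹ * ((-a.1) ⬝ᵥ M *ᵥ a.1) = 0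
      simp only [neg_dotProduct]
      ring

end Heis

/-- The action of an invertible matrix `g` on the Heisenberg group: `g ⋅ (v, z) = (g v, z)`. -/
def heisAct {F : Type} [Field F] {ι : Type} [Fintype ι] {M : Matrix ι ι F}
    (g : Matrix ι ι F) (h : Heis F ι M) : Heis F ι M :=
  (g *ᵥ h.1, h.2)

/-- `π` has central character `ψ`, i.e. `π (0, z) = ψ z • 1`. -/
def HasCentralChar {F : Type} [Field F] {ι : Type} [Fintype ι] {M : Matrix ι ι F}
    {W : Type} [AddCommGroup W] [Module ℂ W]
    (π : Representation ℂ (Heis F ι M) W) (ψ : AddChar F ℂ) : Prop :=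
  ∀ z : F, π ((0, z) : Heis F ι M) = ψ z • (1 : W →ₗ[ℂ] W)

/-- `ω : Sp → GL(W)` is an oscillator representation for `π`: it satisfies the
Egorov identity `ω g ∘ π h ∘ (ω g)⁻¹ = π (g ⋅ h)`. -/
def IsOscillator {F : Type} [Field F] {ι : Type} [Fintype ι] [DecidableEq ι]
    {M : Matrix ι ι F} {W : Type} [AddCommGroup W] [Module ℂ W]
    (π : Representation ℂ (Heis F ι M) W)
    (ω : ↥(matIsom F ι M) →* (W →ₗ[ℂ] W)ˣ) : Prop :=
  ∀ (g : ↥(matIsom F ι M)) (h : Heis F ι M),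
    (ω g : W →ₗ[ℂ] W) * π h * ((ω g)⁻¹ : (W →ₗ[ℂ] W)ˣ)
      = π (heisAct ((g : (Matrix ι ι F)ˣ) : Matrix ι ι F) h)

/-- Convert a homomorphism to `GL(W)` into a representation on `W`. -/
def toRep {G : Type} [Monoid G] {W : Type} [AddCommGroup W] [Module ℂ W]
    (ω : G →* (W →ₗ[ℂ] W)ˣ) : Representation ℂ G W :=
  (Units.coeHom (W →ₗ[ℂ] W)).comp ω

lemma negI_mem (F : Type) [Field F] (n : ℕ) :
    (-1 : (Matrix (Fin n ⊕ Fin n) (Fin n ⊕ Fin n) F)ˣ) ∈ Sp F n := by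
  show ((-1 : (Matrix (Fin n ⊕ Fin n) (Fin n ⊕ Fin n) F)ˣ) : Matrix _ _ F)ᵀ * Jmat F n
      * ((-1 : (Matrix (Fin n ⊕ Fin n) (Fin n ⊕ Fin n) F)ˣ) : Matrix _ _ F) = Jmat F n
  simp

/-- The element `-I` of `Sp_{2n}(F)`. -/
def negI (F : Type) [Field F] (n : ℕ) : ↥(Sp F n) := ⟨-1, negI_mem F n⟩

/-- A submodule is invariant under a representation. -/
def InvariantUnder {G : Type} [Monoid G] {W : Type} [AddCommGroup W] [Module ℂ W]
    (ρ : Representation ℂ G W) (p : Submodule ℂ W) : Prop :=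
  ∀ g : G, ∀ w ∈ p, ρ g w ∈ p

/-- `p` is an invariant subspace on which `ρ` restricts to an irreducible
subrepresentation. -/
def IsIrreducibleSubrep {G : Type} [Monoid G] {W : Type} [AddCommGroup W] [Module ℂ W]
    (ρ : Representation ℂ G W) (p : Submodule ℂ W) : Prop :=
  InvariantUnder ρ p ∧ p ≠ ⊥ ∧
    ∀ s : Submodule ℂ W, s ≤ p → InvariantUnder ρ s → s = ⊥ ∨ s = p

/-- Isomorphism of the subrepresentations carried by invariant subspaces `p`, `p'` of
representations `ρ`, `ρ'`. -/
def SubRepIso {G : Type} [Monoid G] {W W' : Type} [AddCommGroup W] [Module ℂ W]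
    [AddCommGroup W'] [Module ℂ W']
    (ρ : Representation ℂ G W) (ρ' : Representation ℂ G W')
    (p : Submodule ℂ W) (p' : Submodule ℂ W') : Prop :=
  ∃ e : ↥p ≃ₗ[ℂ] ↥p', ∀ (g : G) (w w₂ : ↥p), ρ g ↑w = (w₂ : W) →
    ρ' g ↑(e w) = ((e w₂ : ↥p') : W')

/-- The multiplicity of the character `n_A ↦ ψ((1/2) Tr(B * A))` of the Siegel unipotent
radical in the subrepresentation carried by the invariant subspace `p`. -/
noncomputable def multBOn {F : Type} [Field F] {n : ℕ} {W : Type} [AddCommGroup W] [Module ℂ W]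
    (ρ : Representation ℂ (↥(Sp F n)) W) (ψ : AddChar F ℂ) (B : Matrix (Fin n) (Fin n) F)
    (p : Submodule ℂ W) : ℕ :=
  Module.finrank ℂ
    ↥(p ⊓ ⨅ A : {A : Matrix (Fin n) (Fin n) F // A.IsSymm},
      Module.End.eigenspace (ρ (nUnip F n A.1 A.2)) (ψ ((2 : F)⁻¹ * Matrix.trace (B * A.1))))

/-- The multiplicity `m'_B(ρ)` of the character `n_A ↦ ψ((1/2) Tr(B * A))` of the Siegel
unipotent radical `N` in the restriction of `ρ` to `N`. -/
noncomputable def multB' {F : Type} [Field F] {n : ℕ} {W : Type} [AddCommGroup W] [Module ℂ W]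
    (ρ : Representation ℂ (↥(Sp F n)) W) (ψ : AddChar F ℂ) (B : Matrix (Fin n) (Fin n) F) : ℕ :=
  Module.finrank ℂ
    ↥(⨅ A : {A : Matrix (Fin n) (Fin n) F // A.IsSymm},
      Module.End.eigenspace (ρ (nUnip F n A.1 A.2)) (ψ ((2 : F)⁻¹ * Matrix.trace (B * A.1))))

/-- The symmetric bilinear form `β_T(x, x') = β(Tx, Tx')` on `F^n`, where `β` is the
bilinear form on `F^k` with Gram matrix `G`. -/
def betaT {F : Type} [Field F] {k n : ℕ} (G : Matrix (Fin k) (Fin k) F)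
    (T : Matrix (Fin k) (Fin n) F) : (Fin n → F) → (Fin n → F) → F :=
  fun x x' => (T *ᵥ x) ⬝ᵥ (G *ᵥ (T *ᵥ x'))

/-- The subgroup of invertible matrices preserving a bilinear form `Φ` on `ι → F`. -/
def formStab (F : Type) [Field F] (ι : Type) [Fintype ι] [DecidableEq ι]
    (Φ : (ι → F) → (ι → F) → F) : Subgroup (Matrix ι ι F)ˣ where
  carrier := {g | ∀ x y : ι → F, Φ ((g : Matrix ι ι F) *ᵥ x) ((g : Matrix ι ι F) *ᵥ y) = Φ x y}
  one_mem' := by intro x y; simp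
  mul_mem' := by
    intro a b ha hb x y
    simp only [Units.val_mul, ← Matrix.mulVec_mulVec]
    rw [ha, hb]
  inv_mem' := by
    intro a ha x y
    have h : ∀ v : ι → F, (a : Matrix ι ι F) *ᵥ (((a⁻¹ : (Matrix ι ι F)ˣ) : Matrix ι ι F) *ᵥ v) = v := by
      intro v
      rw [Matrix.mulVec_mulVec, ← Units.val_mul, mul_inv_cancel, Units.val_one, Matrix.one_mulVec]
    calc Φ ((a⁻¹ : (Matrix ι ι F)ˣ) *ᵥ x) ((a⁻¹ : (Matrix ι ι F)ˣ) *ᵥ y)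
        = Φ ((a : Matrix ι ι F) *ᵥ ((a⁻¹ : (Matrix ι ι F)ˣ) *ᵥ x))
            ((a : Matrix ι ι F) *ᵥ ((a⁻¹ : (Matrix ι ι F)ˣ) *ᵥ y)) := (ha _ _).symm
      _ = Φ x y := by rw [h, h]

/-- The `n × n` matrix `diag(G, 0)` obtained by placing `G` in the upper-left `k × k`
corner and zeros elsewhere. -/
def diagEmbed {F : Type} [Field F] {k n : ℕ} (G : Matrix (Fin k) (Fin k) F) (h : k ≤ n) :
    Matrix (Fin n) (Fin n) F :=
  Matrix.reindex (finSumFinEquiv.trans (finCongr (Nat.add_sub_cancel' h)))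
    (finSumFinEquiv.trans (finCongr (Nat.add_sub_cancel' h)))
    (fromBlocks G 0 0 (0 : Matrix (Fin (n - k)) (Fin (n - k)) F))


open Matrix

section FormBasics
variable {F : Type} [Field F] {n : ℕ}

/-- The symplectic form. -/
def Bf {F : Type} [Field F] {n : ℕ} (v w : (Fin n ⊕ Fin n) → F) : F :=
  v ⬝ᵥ (Jmat F n *ᵥ w)

lemma Jmat_mulVec (x : (Fin n ⊕ Fin n) → F) :
    Jmat F n *ᵥ x = Sum.elim (fun i => x (Sum.inr i)) (fun i => - x (Sum.inl i)) := by
  have : x = Sum.elim (x ∘ Sum.inl) (x ∘ Sum.inr) := by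
    funext i; cases i <;> rfl
  rw [Jmat, this, fromBlocks_mulVec]
  funext i
  cases i <;> simp [mulVec, dotProduct, one_apply]

lemma Bf_eq (x y : (Fin n ⊕ Fin n) → F) :
    Bf x y = (fun i => x (Sum.inl i)) ⬝ᵥ (fun i => y (Sum.inr i))
      - (fun i => x (Sum.inr i)) ⬝ᵥ (fun i => y (Sum.inl i)) := by
  rw [Bf, Jmat_mulVec]
  have : x = Sum.elim (x ∘ Sum.inl) (x ∘ Sum.inr) := by funext i; cases i <;> rfl
  rw [this]
  conv_lhs => rw [this]
  rw [sumElim_dotProduct_sumElim]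
  simp only [dotProduct, Function.comp, mul_neg, sub_eq_add_neg, Finset.sum_neg_distrib]

lemma Bf_self (x : (Fin n ⊕ Fin n) → F) : Bf x x = 0 := by
  rw [Bf_eq, dotProduct_comm]; ring

lemma Bf_skew (x y : (Fin n ⊕ Fin n) → F) : Bf x y = - Bf y x := by
  rw [Bf_eq, Bf_eq, dotProduct_comm, dotProduct_comm (fun i => x (Sum.inr i))]; ring

lemma Bf_add_left (x x' y : (Fin n ⊕ Fin n) → F) : Bf (x + x') y = Bf x y + Bf x' y := by
  simp [Bf, add_dotProduct]

lemma Bf_add_right (x y y' : (Fin n ⊕ Fin n) → F) : Bf x (y + y') = Bf x y + Bf x y' := by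
  simp [Bf, mulVec_add, dotProduct_add]

lemma Bf_smul_left (c : F) (x y : (Fin n ⊕ Fin n) → F) : Bf (c • x) y = c * Bf x y := by
  simp [Bf, smul_dotProduct]

lemma Bf_smul_right (c : F) (x y : (Fin n ⊕ Fin n) → F) : Bf x (c • y) = c * Bf x y := by
  simp [Bf, mulVec_smul, dotProduct_smul]

lemma Bf_neg_left (x y : (Fin n ⊕ Fin n) → F) : Bf (-x) y = - Bf x y := by
  simp [Bf, neg_dotProduct]

lemma Bf_neg_right (x y : (Fin n ⊕ Fin n) → F) : Bf x (-y) = - Bf x y := by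
  simp [Bf, mulVec_neg, dotProduct_neg]

lemma Bf_zero_left (y : (Fin n ⊕ Fin n) → F) : Bf 0 y = 0 := by simp [Bf]

lemma Bf_sub_right (x y y' : (Fin n ⊕ Fin n) → F) : Bf x (y - y') = Bf x y - Bf x y' := by
  rw [sub_eq_add_neg, Bf_add_right, Bf_neg_right]; ring

lemma Jmat_mul_Jmat : (Jmat F n) * (Jmat F n) = -1 := by
  rw [Jmat, fromBlocks_multiply]
  ext (i|i) (j|j) <;> simp [one_apply] <;> split <;> simp_all

lemma Jmat_mulVec_eq_zero {x : (Fin n ⊕ Fin n) → F} (h : Jmat F n *ᵥ x = 0) : x = 0 := by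
  have h2 : (Jmat F n * Jmat F n) *ᵥ x = 0 := by
    rw [← mulVec_mulVec, h, mulVec_zero]
  rw [Jmat_mul_Jmat, neg_mulVec, one_mulVec] at h2
  simpa using h2

/-- Surjectivity of `w ↦ Bf w x` for nonzero `x`. -/
lemma Bf_surj_left {x : (Fin n ⊕ Fin n) → F} (hx : x ≠ 0) (t : F) :
    ∃ w, Bf w x = t := by
  have hJ : Jmat F n *ᵥ x ≠ 0 := fun h => hx (Jmat_mulVec_eq_zero h)
  obtain ⟨i, hi⟩ : ∃ i, (Jmat F n *ᵥ x) i ≠ 0 := by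
    by_contra h
    push_neg at h
    exact hJ (funext h)
  refine ⟨Pi.single i (t / (Jmat F n *ᵥ x) i), ?_⟩
  rw [Bf, single_dotProduct, div_mul_cancel₀ _ hi]

lemma Bf_surj_right {x : (Fin n ⊕ Fin n) → F} (hx : x ≠ 0) (t : F) :
    ∃ w, Bf x w = t := by
  obtain ⟨w, hw⟩ := Bf_surj_left hx (-t)
  exact ⟨w, by rw [Bf_skew, hw, neg_neg]⟩

end FormBasics

section CharSum
variable {F : Type} [Field F] [Fintype F]

lemma psi_ne_zero (ψ : AddChar F ℂ) (x : F) : ψ x ≠ 0 := by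
  intro h
  have : ψ x * ψ (-x) = 1 := by rw [← AddChar.map_add_eq_mul, add_neg_cancel, AddChar.map_zero_eq_one]
  rw [h, zero_mul] at this
  exact zero_ne_one this

lemma sum_psi_dot {ι : Type} [Fintype ι] [DecidableEq ι] {ψ : AddChar F ℂ} (hψ : ψ ≠ 1)
    {c : ι → F} (hc : c ≠ 0) : ∑ w : ι → F, ψ (w ⬝ᵥ c) = 0 := by
  obtain ⟨t, ht⟩ := AddChar.ne_one_iff.mp hψ
  obtain ⟨i, hi⟩ : ∃ i, c i ≠ 0 := by
    by_contra h; push_neg at h; exact hc (funext h)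
  set w₀ : ι → F := Pi.single i (t / c i) with hw₀
  have hdot : w₀ ⬝ᵥ c = t := by rw [hw₀, single_dotProduct, div_mul_cancel₀ _ hi]
  have key : ∑ w : ι → F, ψ (w ⬝ᵥ c) = ψ t * ∑ w : ι → F, ψ (w ⬝ᵥ c) := by
    rw [Finset.mul_sum]
    have h1 : ψ t * ψ (-t) = 1 := by
      rw [← AddChar.map_add_eq_mul, add_neg_cancel, AddChar.map_zero_eq_one]
    refine Fintype.sum_equiv (Equiv.subRight w₀) _ _ (fun w => ?_)
    rw [Equiv.subRight_apply, sub_dotProduct, hdot, sub_eq_add_neg, AddChar.map_add_eq_mul]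
    linear_combination (-ψ (w ⬝ᵥ c)) * h1
  have : (1 - ψ t) * ∑ w : ι → F, ψ (w ⬝ᵥ c) = 0 := by rw [sub_mul, one_mul, ← key, sub_self]
  rcases mul_eq_zero.mp this with h | h
  · exact absurd (by linear_combination -h : ψ t = 1) ht
  · exact h

lemma sum_psi_Bf {n : ℕ} {ψ : AddChar F ℂ} (hψ : ψ ≠ 1)
    {x : (Fin n ⊕ Fin n) → F} (hx : x ≠ 0) : ∑ w : (Fin n ⊕ Fin n) → F, ψ (Bf w x) = 0 := by
  have : Jmat F n *ᵥ x ≠ 0 := fun h => hx (Jmat_mulVec_eq_zero h)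
  exact sum_psi_dot hψ this

end CharSum
open Matrix

set_option linter.unusedSectionVars false

lemma two_ne_zero_of_odd_card {F : Type} [Field F] [Fintype F]
    (hodd : Odd (Fintype.card F)) : (2 : F) ≠ 0 := by
  intro h2
  obtain ⟨k, hp, hcard⟩ := FiniteField.card F (ringChar F)
  have hdvd : ringChar F ∣ 2 := (CharP.cast_eq_zero_iff F (ringChar F) 2).mp h2
  have h1 : ringChar F = 1 ∨ ringChar F = 2 := (Nat.dvd_prime Nat.prime_two).mp hdvd
  have : ringChar F = 2 := h1.resolve_left hp.one_lt.ne'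
  rw [this] at hcard
  have heven : Even (Fintype.card F) := by
    rw [hcard]
    exact (Nat.even_pow).mpr ⟨even_two, by positivity⟩
  exact (Nat.not_even_iff_odd.mpr hodd) heven

/-- Element constructor for the Heisenberg group (avoiding `Prod` instance clashes). -/
def mkH {F : Type} [Field F] {ι : Type} [Fintype ι] {M : Matrix ι ι F}
    (v : ι → F) (z : F) : Heis F ι M := (v, z)

section MkH
variable {F : Type} [Field F] {n : ℕ}

lemma mkH_mul (v u : (Fin n ⊕ Fin n) → F) (z z' : F) :
    (mkH v z : Heis F (Fin n ⊕ Fin n) (Jmat F n)) * mkH u z'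
      = mkH (v + u) (z + z' + (2:F)⁻¹ * Bf v u) := rfl

lemma mkH_one : (1 : Heis F (Fin n ⊕ Fin n) (Jmat F n)) = mkH 0 0 := rfl

lemma mkH_pair (v : (Fin n ⊕ Fin n) → F) (z : F) :
    (mkH v z : Heis F (Fin n ⊕ Fin n) (Jmat F n)) = ((v, z) : Heis F (Fin n ⊕ Fin n) (Jmat F n)) := rfl

lemma mkH_congr (v v' : (Fin n ⊕ Fin n) → F) (z z' : F) (hv : v = v') (hz : z = z') :
    (mkH v z : Heis F (Fin n ⊕ Fin n) (Jmat F n)) = mkH v' z' := by rw [hv, hz]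

end MkH

section PiLemmas
variable {F : Type} [Field F] [Fintype F] {n : ℕ}
  {W : Type} [AddCommGroup W] [Module ℂ W]
  (π : Representation ℂ (Heis F (Fin n ⊕ Fin n) (Jmat F n)) W)
  {ψ : AddChar F ℂ}

lemma pi_zero_eq_one : π (mkH 0 0) = 1 := by
  rw [← mkH_one, _root_.map_one]

lemma pi_z (hcc : HasCentralChar π ψ) (v : (Fin n ⊕ Fin n) → F) (z : F) :
    π (mkH v z) = ψ z • π (mkH v 0) := by
  have h : (mkH 0 z : Heis F (Fin n ⊕ Fin n) (Jmat F n)) * mkH v 0 = mkH v z := by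
    rw [mkH_mul]
    exact mkH_congr _ _ _ _ (by simp) (by rw [Bf_zero_left]; ring)
  have hz : π (mkH 0 z) = ψ z • 1 := hcc z
  calc π (mkH v z) = π ((mkH 0 z : Heis F (Fin n ⊕ Fin n) (Jmat F n)) * mkH v 0) := by rw [h]
    _ = π (mkH 0 z) * π (mkH v 0) := _root_.map_mul π _ _
    _ = ψ z • π (mkH v 0) := by rw [hz, smul_mul_assoc, one_mul]

lemma pi_mul (hcc : HasCentralChar π ψ) (v u : (Fin n ⊕ Fin n) → F) :
    π (mkH v 0) * π (mkH u 0) = ψ ((2:F)⁻¹ * Bf v u) • π (mkH (v + u) 0) := by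
  rw [← _root_.map_mul, mkH_mul]
  have : (0:F) + 0 + (2:F)⁻¹ * Bf v u = (2:F)⁻¹ * Bf v u := by ring
  rw [mkH_congr _ _ _ _ rfl this]
  exact pi_z π hcc _ _

lemma pi_conj (hcc : HasCentralChar π ψ) (h2 : (2:F) ≠ 0) (w v : (Fin n ⊕ Fin n) → F) :
    π (mkH w 0) * π (mkH v 0) * π (mkH (-w) 0) = ψ (Bf w v) • π (mkH v 0) := by
  rw [pi_mul π hcc, smul_mul_assoc, pi_mul π hcc]
  have hv : w + v + -w = v := by abel
  have hB : Bf (w + v) (-w) = Bf w v := by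
    rw [Bf_neg_right, Bf_add_left, Bf_self, Bf_skew v w]
    ring
  rw [hv, hB, smul_smul, ← AddChar.map_add_eq_mul]
  congr 2
  field_simp
  ring

lemma pi_mul_neg (hcc : HasCentralChar π ψ) (w : (Fin n ⊕ Fin n) → F) :
    π (mkH w 0) * π (mkH (-w) 0) = 1 := by
  rw [pi_mul π hcc]
  have h1 : Bf w (-w) = 0 := by rw [Bf_neg_right, Bf_self, neg_zero]
  rw [h1, mul_zero, AddChar.map_zero_eq_one, one_smul, add_neg_cancel, pi_zero_eq_one]

lemma pi_ne_zero (hcc : HasCentralChar π ψ) (hW : Nontrivial W) (v : (Fin n ⊕ Fin n) → F) :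
    π (mkH v 0) ≠ 0 := by
  intro h
  have h1 := pi_mul_neg π hcc v
  rw [h, zero_mul] at h1
  obtain ⟨w, hw⟩ := exists_ne (0 : W)
  have : (0 : Module.End ℂ W) w = (1 : Module.End ℂ W) w := by rw [h1]
  simp only [LinearMap.zero_apply, Module.End.one_apply] at this
  exact hw this.symm

lemma pi_indep (hψ : ψ ≠ 1) (hcc : HasCentralChar π ψ) (h2 : (2:F) ≠ 0) (hW : Nontrivial W) :
    LinearIndependent ℂ (fun v : (Fin n ⊕ Fin n) → F => π (mkH v 0)) := by
  rw [Fintype.linearIndependent_iff]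
  intro g hsum u
  have hE : ∀ w : (Fin n ⊕ Fin n) → F,
      ∑ v : (Fin n ⊕ Fin n) → F, (ψ (- Bf w u) * (g v * ψ (Bf w v))) • π (mkH v 0) = 0 := by
    intro w
    have h0 : π (mkH w 0) * (∑ v : (Fin n ⊕ Fin n) → F, g v • π (mkH v 0)) * π (mkH (-w) 0) = 0 := by
      rw [hsum, mul_zero, zero_mul]
    have h1 : π (mkH w 0) * (∑ v : (Fin n ⊕ Fin n) → F, g v • π (mkH v 0)) * π (mkH (-w) 0)
        = ∑ v : (Fin n ⊕ Fin n) → F, (g v * ψ (Bf w v)) • π (mkH v 0) := by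
      rw [Finset.mul_sum, Finset.sum_mul]
      refine Finset.sum_congr rfl (fun v _ => ?_)
      rw [mul_smul_comm, smul_mul_assoc, pi_conj π hcc h2 w v, smul_smul, mul_comm]
    rw [h1] at h0
    calc ∑ v : (Fin n ⊕ Fin n) → F, (ψ (- Bf w u) * (g v * ψ (Bf w v))) • π (mkH v 0)
        = ψ (- Bf w u) • ∑ v : (Fin n ⊕ Fin n) → F, (g v * ψ (Bf w v)) • π (mkH v 0) := by
          rw [Finset.smul_sum]
          exact Finset.sum_congr rfl (fun v _ => by rw [smul_smul])
      _ = 0 := by rw [h0, smul_zero]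
  have htot : ∑ v : (Fin n ⊕ Fin n) → F,
      (g v * ∑ w : (Fin n ⊕ Fin n) → F, ψ (Bf w (v - u))) • π (mkH v 0) = 0 := by
    have h3 := Finset.sum_congr rfl (fun w (_ : w ∈ (Finset.univ : Finset ((Fin n ⊕ Fin n) → F))) => hE w)
    rw [Finset.sum_const, smul_zero, Finset.sum_comm] at h3
    rw [← h3]
    refine Finset.sum_congr rfl (fun v _ => ?_)
    rw [Finset.mul_sum, ← Finset.sum_smul]
    refine congrArg (· • π (mkH v 0)) ?_
    refine Finset.sum_congr rfl (fun w _ => ?_)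
    rw [Bf_sub_right, sub_eq_add_neg, AddChar.map_add_eq_mul]
    ring
  have hce : ∀ v : (Fin n ⊕ Fin n) → F, v ∈ Finset.univ → v ≠ u →
      (g v * ∑ w : (Fin n ⊕ Fin n) → F, ψ (Bf w (v - u))) • π (mkH v 0) = 0 := by
    intro v _ hv
    rw [sum_psi_Bf hψ (sub_ne_zero.mpr hv), mul_zero, zero_smul]
  rw [Finset.sum_eq_single u hce (fun h => absurd (Finset.mem_univ u) h)] at htot
  have hself : ∑ w : (Fin n ⊕ Fin n) → F, ψ (Bf w (u - u)) = (Fintype.card ((Fin n ⊕ Fin n) → F) : ℂ) := by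
    rw [sub_self]
    have h4 : ∀ w : (Fin n ⊕ Fin n) → F, ψ (Bf w 0) = 1 := by
      intro w
      rw [Bf, mulVec_zero, dotProduct_zero, AddChar.map_zero_eq_one]
    rw [Finset.sum_congr rfl (fun w _ => h4 w), Finset.sum_const, Finset.card_univ]
    simp
  rw [hself] at htot
  rcases smul_eq_zero.mp htot with h | h
  · rcases mul_eq_zero.mp h with h | h
    · exact h
    · exact absurd h (by exact_mod_cast Fintype.card_ne_zero)
  · exact absurd h (pi_ne_zero π hcc hW u)

end PiLemmas
open Matrix

set_option linter.unusedSectionVars false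
set_option maxHeartbeats 1000000

section LagVec
variable {F : Type} [Field F] {n : ℕ}

/-- Vector in the "first" Lagrangian. -/
def lv {F : Type} [Field F] {n : ℕ} (x : Fin n → F) : (Fin n ⊕ Fin n) → F := Sum.elim x 0

/-- Vector in the "second" Lagrangian. -/
def rv {F : Type} [Field F] {n : ℕ} (b : Fin n → F) : (Fin n ⊕ Fin n) → F := Sum.elim 0 b

lemma Bf_lv_lv (x y : Fin n → F) : Bf (lv x) (lv y) = 0 := by
  simp [Bf_eq, lv, dotProduct]

lemma Bf_rv_rv (x y : Fin n → F) : Bf (rv x) (rv y) = 0 := by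
  simp [Bf_eq, rv, dotProduct]

lemma Bf_lv_rv (x b : Fin n → F) : Bf (lv x) (rv b) = x ⬝ᵥ b := by
  simp [Bf_eq, lv, rv, dotProduct]

lemma Bf_rv_lv (b x : Fin n → F) : Bf (rv b) (lv x) = -(b ⬝ᵥ x) := by
  simp [Bf_eq, lv, rv, dotProduct]

lemma lv_add (x y : Fin n → F) : lv (x + y) = (lv x + lv y : (Fin n ⊕ Fin n) → F) := by
  funext i; cases i <;> simp [lv]

lemma rv_add (x y : Fin n → F) : rv (x + y) = (rv x + rv y : (Fin n ⊕ Fin n) → F) := by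
  funext i; cases i <;> simp [rv]

lemma lv_zero : (lv 0 : (Fin n ⊕ Fin n) → F) = 0 := by
  funext i; cases i <;> simp [lv]

lemma rv_zero : (rv 0 : (Fin n ⊕ Fin n) → F) = 0 := by
  funext i; cases i <;> simp [rv]

lemma lv_rv_decomp (x : (Fin n ⊕ Fin n) → F) :
    x = lv (fun i => x (Sum.inl i)) + rv (fun i => x (Sum.inr i)) := by
  funext i; cases i <;> simp [lv, rv]

end LagVec

section Vacuum
variable {F : Type} [Field F] [Fintype F] {n : ℕ}
  {W : Type} [AddCommGroup W] [Module ℂ W]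
  (π : Representation ℂ (Heis F (Fin n ⊕ Fin n) (Jmat F n)) W)
  {ψ : AddChar F ℂ}

lemma exists_vacuum (hψ : ψ ≠ 1) (hcc : HasCentralChar π ψ) (h2 : (2:F) ≠ 0) (hW : Nontrivial W) :
    ∃ w₂ : W, w₂ ≠ 0 ∧ ∀ (y : Fin n → F) (z : F), π (mkH (lv y) z) w₂ = ψ z • w₂ := by
  classical
  set E : (Fin n → F) → Module.End ℂ W :=
    fun c => ∑ x : Fin n → F, ψ (-(c ⬝ᵥ x)) • π (mkH (lv x) 0) with hE
  -- the sum of all E c is card • 1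
  have hsumE : ∑ c : Fin n → F, E c = ((Fintype.card (Fin n → F)) : ℂ) • 1 := by
    rw [hE, Finset.sum_comm]
    have hterm : ∀ x : Fin n → F, x ∈ Finset.univ →
        ∑ c : Fin n → F, ψ (-(c ⬝ᵥ x)) • π (mkH (lv x) 0)
          = (∑ c : Fin n → F, ψ (c ⬝ᵥ (-x))) • π (mkH (lv x) 0) := by
      intro x _
      rw [Finset.sum_smul]
      exact Finset.sum_congr rfl (fun c _ => by rw [dotProduct_neg])
    rw [Finset.sum_congr rfl hterm]
    rw [Finset.sum_eq_single (0 : Fin n → F)]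
    · have : ∀ c : Fin n → F, ψ (c ⬝ᵥ (-(0 : Fin n → F))) = 1 := by
        intro c; rw [neg_zero, dotProduct_zero, AddChar.map_zero_eq_one]
      rw [Finset.sum_congr rfl (fun c _ => this c), Finset.sum_const, Finset.card_univ, lv_zero,
        pi_zero_eq_one]
      simp
    · intro x _ hx
      rw [sum_psi_dot hψ (neg_ne_zero.mpr hx), zero_smul]
    · intro h; exact absurd (Finset.mem_univ _) h
  obtain ⟨w, hw⟩ := exists_ne (0 : W)
  have hex : ∃ c : Fin n → F, E c w ≠ 0 := by
    by_contra h
    push_neg at h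
    have : (∑ c : Fin n → F, E c) w = 0 := by
      rw [LinearMap.sum_apply]
      exact Finset.sum_eq_zero (fun c _ => h c)
    rw [hsumE] at this
    simp only [LinearMap.smul_apply, Module.End.one_apply] at this
    rcases smul_eq_zero.mp this with h' | h'
    · exact (Nat.cast_ne_zero.mpr Fintype.card_ne_zero) h'
    · exact hw h'
  obtain ⟨c, hc⟩ := hex
  -- commutation relation
  have hcomm : ∀ y : Fin n → F, π (mkH (lv y) 0) * E c = ψ (c ⬝ᵥ y) • E c := by
    intro y
    rw [hE]
    rw [Finset.mul_sum, Finset.smul_sum]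
    refine Fintype.sum_equiv (Equiv.addLeft y) _ _ (fun x => ?_)
    rw [mul_smul_comm, pi_mul π hcc, Bf_lv_lv, mul_zero, AddChar.map_zero_eq_one, one_smul,
      ← lv_add]
    simp only [Equiv.coe_addLeft]
    have hs : ψ (c ⬝ᵥ y) * ψ (-(c ⬝ᵥ (y + x))) = ψ (-(c ⬝ᵥ x)) := by
      rw [← AddChar.map_add_eq_mul]
      congr 1
      rw [dotProduct_add]
      ring
    rw [smul_smul, hs]
  set w₁ : W := E c w with hw₁
  have hy1 : ∀ y : Fin n → F, π (mkH (lv y) 0) w₁ = ψ (c ⬝ᵥ y) • w₁ := by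
    intro y
    have := congrArg (fun (T : Module.End ℂ W) => T w) (hcomm y)
    simpa using this
  set u : (Fin n ⊕ Fin n) → F := rv (-c) with hu
  refine ⟨π (mkH u 0) w₁, ?_, ?_⟩
  · intro h
    have h1 := pi_mul_neg π hcc (-u)
    rw [neg_neg] at h1
    have : π (mkH (-u) 0) (π (mkH u 0) w₁) = w₁ := by
      rw [← Module.End.mul_apply, h1, Module.End.one_apply]
    rw [h, map_zero] at this
    exact hc this.symm
  · intro y z
    have hgrp : (mkH (lv y) z : Heis F (Fin n ⊕ Fin n) (Jmat F n)) * mkH u 0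
        = mkH u 0 * mkH (lv y) (z - c ⬝ᵥ y) := by
      rw [mkH_mul, mkH_mul]
      refine mkH_congr _ _ _ _ (add_comm _ _) ?_
      rw [hu, Bf_lv_rv, Bf_rv_lv, dotProduct_neg, neg_dotProduct, dotProduct_comm]
      have h2' : (2:F)⁻¹ * 2 = 1 := inv_mul_cancel₀ h2
      linear_combination (-(c ⬝ᵥ y)) * h2'
    calc π (mkH (lv y) z) (π (mkH u 0) w₁)
        = π ((mkH (lv y) z : Heis F (Fin n ⊕ Fin n) (Jmat F n)) * mkH u 0) w₁ := by
          rw [_root_.map_mul]; rfl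
      _ = π ((mkH u 0 : Heis F (Fin n ⊕ Fin n) (Jmat F n)) * mkH (lv y) (z - c ⬝ᵥ y)) w₁ := by
          rw [hgrp]
      _ = π (mkH u 0) (π (mkH (lv y) (z - c ⬝ᵥ y)) w₁) := by rw [_root_.map_mul]; rfl
      _ = ψ z • π (mkH u 0) w₁ := by
          rw [pi_z π hcc (lv y) (z - c ⬝ᵥ y), LinearMap.smul_apply, hy1 y, smul_smul,
            ← AddChar.map_add_eq_mul, sub_add_cancel, LinearMap.map_smul]

lemma span_vacuum_top (hψ : ψ ≠ 1) (hcc : HasCentralChar π ψ) (hirr : IsIrredRep π)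
    {w₂ : W} (hw₂ : w₂ ≠ 0)
    (hvac : ∀ (y : Fin n → F) (z : F), π (mkH (lv y) z) w₂ = ψ z • w₂) :
    Submodule.span ℂ (Set.range (fun b : Fin n → F => π (mkH (rv b) 0) w₂)) = ⊤ := by
  classical
  set f : (Fin n → F) → W := fun b => π (mkH (rv b) 0) w₂ with hf
  set p := Submodule.span ℂ (Set.range f) with hp
  have hmove : ∀ (h : Heis F (Fin n ⊕ Fin n) (Jmat F n)) (b : Fin n → F), ∃ (b' : Fin n → F) (s : ℂ),
      π h (f b) = s • f b' := by
    intro h b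
    set x₁ : Fin n → F := fun i => h.1 (Sum.inl i) with hx₁
    set x₂ : Fin n → F := fun i => h.1 (Sum.inr i) with hx₂
    set z' : F := h.2 + (2:F)⁻¹ * Bf h.1 (rv b) - (2:F)⁻¹ * Bf (rv (b + x₂)) (lv x₁) with hz'
    have hgrp : (mkH h.1 h.2 : Heis F (Fin n ⊕ Fin n) (Jmat F n)) * mkH (rv b) 0
        = mkH (rv (b + x₂)) 0 * mkH (lv x₁) z' := by
      rw [mkH_mul, mkH_mul]
      refine mkH_congr _ _ _ _ ?_ ?_
      · rw [rv_add]
        conv_lhs => rw [lv_rv_decomp h.1]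
        rw [← hx₁, ← hx₂]
        abel
      · rw [hz']; ring
    have hh : h = mkH h.1 h.2 := rfl
    refine ⟨b + x₂, ψ z', ?_⟩
    calc π h (f b) = π ((mkH h.1 h.2 : Heis F (Fin n ⊕ Fin n) (Jmat F n)) * mkH (rv b) 0) w₂ := by
          rw [← hh, _root_.map_mul]; rfl
      _ = π (mkH (rv (b + x₂)) 0) (π (mkH (lv x₁) z') w₂) := by rw [hgrp, _root_.map_mul]; rfl
      _ = ψ z' • f (b + x₂) := by rw [hvac x₁ z', LinearMap.map_smul]
  have hinv : ∀ (h : Heis F (Fin n ⊕ Fin n) (Jmat F n)), ∀ w ∈ p, π h w ∈ p := by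
    intro h w hwp
    have hsub : Submodule.map (π h) p ≤ p := by
      rw [hp, Submodule.map_span, Submodule.span_le]
      rintro _ ⟨_, ⟨b, rfl⟩, rfl⟩
      obtain ⟨b', s, hb⟩ := hmove h b
      rw [hb]
      exact Submodule.smul_mem _ _ (Submodule.subset_span ⟨b', rfl⟩)
    exact hsub ⟨w, hwp, rfl⟩
  rcases hirr.2 p hinv with hbot | htop
  · exfalso
    have : w₂ ∈ p := by
      have h0 : f 0 = w₂ := by
        rw [hf]
        simp only [rv_zero]
        rw [pi_zero_eq_one]
        rfl
      rw [← h0]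
      exact Submodule.subset_span ⟨0, rfl⟩
    rw [hbot] at this
    exact hw₂ (by simpa using this)
  · exact htop

end Vacuum
open Matrix

set_option linter.unusedSectionVars false
set_option maxHeartbeats 1000000

section FinrankW
variable {F : Type} [Field F] [Fintype F] {n : ℕ}
  {W : Type} [AddCommGroup W] [Module ℂ W]
  (π : Representation ℂ (Heis F (Fin n ⊕ Fin n) (Jmat F n)) W)
  {ψ : AddChar F ℂ}

lemma module_finite_of_irr (hψ : ψ ≠ 1) (hcc : HasCentralChar π ψ) (h2 : (2:F) ≠ 0)
    (hirr : IsIrredRep π) : Module.Finite ℂ W := by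
  classical
  haveI hW : Nontrivial W := hirr.1
  obtain ⟨w₂, hw₂, hvac⟩ := exists_vacuum π hψ hcc h2 hW
  have hspan := span_vacuum_top π hψ hcc hirr hw₂ hvac
  exact Module.finite_def.mpr ⟨(Set.finite_range _).toFinset,
    by rw [Set.Finite.coe_toFinset]; exact hspan⟩

lemma finrank_W_eq (hψ : ψ ≠ 1) (hcc : HasCentralChar π ψ) (h2 : (2:F) ≠ 0)
    (hirr : IsIrredRep π) : Module.finrank ℂ W = Fintype.card F ^ n := by
  classical
  haveI hW : Nontrivial W := hirr.1
  haveI hfin : Module.Finite ℂ W := module_finite_of_irr π hψ hcc h2 hirr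
  obtain ⟨w₂, hw₂, hvac⟩ := exists_vacuum π hψ hcc h2 hW
  have hspan := span_vacuum_top π hψ hcc hirr hw₂ hvac
  -- upper bound
  have hup : Module.finrank ℂ W ≤ Fintype.card F ^ n := by
    haveI : Fintype ↑(Set.range fun b : Fin n → F => π (mkH (rv b) 0) w₂) :=
      (Set.finite_range _).fintype
    have h1 := finrank_span_le_card (R := ℂ)
      (Set.range fun b : Fin n → F => π (mkH (rv b) 0) w₂)
    rw [hspan] at h1
    have h2' : Module.finrank ℂ (⊤ : Submodule ℂ W) = Module.finrank ℂ W :=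
      (Submodule.topEquiv (R := ℂ) (M := W)).finrank_eq
    rw [h2'] at h1
    refine h1.trans ?_
    rw [Set.toFinset_card]
    calc Fintype.card ↑(Set.range fun b : Fin n → F => π (mkH (rv b) 0) w₂)
        ≤ Fintype.card (Fin n → F) := Fintype.card_range_le _
      _ = Fintype.card F ^ n := by rw [Fintype.card_fun, Fintype.card_fin]
  -- lower bound via independence of π(v,0) in End W
  have hind := pi_indep π hψ hcc h2 hW
  have hlow : Fintype.card ((Fin n ⊕ Fin n) → F)
      ≤ Module.finrank ℂ (W →ₗ[ℂ] W) := hind.fintype_card_le_finrank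
  rw [Module.finrank_linearMap] at hlow
  have hcV : Fintype.card ((Fin n ⊕ Fin n) → F) = Fintype.card F ^ n * Fintype.card F ^ n := by
    rw [Fintype.card_fun, Fintype.card_sum, Fintype.card_fin, ← pow_add]
  rw [hcV] at hlow
  set d := Module.finrank ℂ W
  set N := Fintype.card F ^ n
  -- N * N ≤ d * d and d ≤ N imply d = N
  have hN : N ≤ d := by
    by_contra hlt
    push_neg at hlt
    have : d * d < N * N := Nat.mul_lt_mul_of_lt_of_le hlt (le_of_lt hlt) (by
      have : 0 < N := by positivity
      omega)
    omega
  omega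

end FinrankW

section Transit
variable {F : Type} [Field F] {n : ℕ}

lemma matrix_eq_of_dot {M N : Matrix (Fin n ⊕ Fin n) (Fin n ⊕ Fin n) F}
    (h : ∀ x y, x ⬝ᵥ (M *ᵥ y) = x ⬝ᵥ (N *ᵥ y)) : M = N := by
  classical
  ext i j
  have := h (Pi.single i 1) (Pi.single j 1)
  rw [mulVec_single, mulVec_single, single_dotProduct, single_dotProduct] at this
  simpa using this

lemma mulVec_dot (M : Matrix (Fin n ⊕ Fin n) (Fin n ⊕ Fin n) F) (x w : (Fin n ⊕ Fin n) → F) :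
    (M *ᵥ x) ⬝ᵥ w = x ⬝ᵥ (Mᵀ *ᵥ w) := by
  rw [dotProduct_comm, dotProduct_mulVec, dotProduct_comm (w ᵥ* M)]
  congr 1
  rw [← vecMul_transpose, transpose_transpose]

lemma Bf_mulVec (g : Matrix (Fin n ⊕ Fin n) (Fin n ⊕ Fin n) F) (x y : (Fin n ⊕ Fin n) → F) :
    Bf (g *ᵥ x) (g *ᵥ y) = x ⬝ᵥ ((gᵀ * Jmat F n * g) *ᵥ y) := by
  rw [Bf, mulVec_mulVec, mulVec_dot, mulVec_mulVec, Matrix.mul_assoc]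

lemma sp_mem_iff (g : (Matrix (Fin n ⊕ Fin n) (Fin n ⊕ Fin n) F)ˣ) :
    g ∈ Sp F n ↔ ∀ x y, Bf (((g : (Matrix (Fin n ⊕ Fin n) (Fin n ⊕ Fin n) F)) *ᵥ x))
      ((g : (Matrix (Fin n ⊕ Fin n) (Fin n ⊕ Fin n) F)) *ᵥ y) = Bf x y := by
  constructor
  · intro hg x y
    have hg' : (g : Matrix (Fin n ⊕ Fin n) (Fin n ⊕ Fin n) F)ᵀ * Jmat F n * g = Jmat F n := hg
    rw [Bf_mulVec, hg']
    rfl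
  · intro h
    show (g : Matrix (Fin n ⊕ Fin n) (Fin n ⊕ Fin n) F)ᵀ * Jmat F n * g = Jmat F n
    refine matrix_eq_of_dot (fun x y => ?_)
    rw [← Bf_mulVec]
    exact h x y

/-- Symplectic transvection matrix. -/
def trvMat (w : (Fin n ⊕ Fin n) → F) (lam : F) : Matrix (Fin n ⊕ Fin n) (Fin n ⊕ Fin n) F :=
  1 + lam • vecMulVec w (Jmat F n *ᵥ w)

lemma vecMulVec_mulVec (w u x : (Fin n ⊕ Fin n) → F) :
    vecMulVec w u *ᵥ x = (u ⬝ᵥ x) • w := by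
  funext i
  simp only [mulVec, vecMulVec_apply, dotProduct, Pi.smul_apply, smul_eq_mul, Finset.sum_mul,
    Finset.mul_sum]
  refine Finset.sum_congr rfl (fun j _ => by ring)

lemma trvMat_mulVec (w : (Fin n ⊕ Fin n) → F) (lam : F) (x : (Fin n ⊕ Fin n) → F) :
    trvMat w lam *ᵥ x = x + (lam * Bf x w) • w := by
  rw [trvMat, add_mulVec, one_mulVec, smul_mulVec, _root_.vecMulVec_mulVec]
  congr 1
  rw [smul_smul]
  congr 1
  rw [dotProduct_comm]
  rfl

lemma vecMulVec_mul_vecMulVec (w u w' u' : (Fin n ⊕ Fin n) → F) :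
    vecMulVec w u * vecMulVec w' u' = (u ⬝ᵥ w') • vecMulVec w u' := by
  ext i j
  simp only [mul_apply, vecMulVec_apply, Matrix.smul_apply, smul_eq_mul, dotProduct, Finset.sum_mul,
    Finset.mul_sum]
  refine Finset.sum_congr rfl (fun k _ => by ring)

lemma trvMat_mul (w : (Fin n ⊕ Fin n) → F) (lam : F) :
    trvMat w lam * trvMat w (-lam) = 1 := by
  have h0 : (Jmat F n *ᵥ w) ⬝ᵥ w = 0 := by
    rw [dotProduct_comm]
    exact Bf_self w
  have hVV : vecMulVec w (Jmat F n *ᵥ w) * vecMulVec w (Jmat F n *ᵥ w) = 0 := by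
    rw [_root_.vecMulVec_mul_vecMulVec, h0, zero_smul]
  rw [trvMat, trvMat, mul_add, mul_one, add_mul, one_mul, Matrix.smul_mul, Matrix.mul_smul, hVV,
    smul_zero, smul_zero, add_zero, neg_smul]
  abel

/-- Symplectic transvection as a unit. -/
def trvU (w : (Fin n ⊕ Fin n) → F) (lam : F) : (Matrix (Fin n ⊕ Fin n) (Fin n ⊕ Fin n) F)ˣ where
  val := trvMat w lam
  inv := trvMat w (-lam)
  val_inv := trvMat_mul w lam
  inv_val := by
    have := trvMat_mul w (-lam)
    rwa [neg_neg] at this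

lemma trvU_mem (w : (Fin n ⊕ Fin n) → F) (lam : F) : trvU w lam ∈ Sp F n := by
  rw [sp_mem_iff]
  intro x y
  show Bf (trvMat w lam *ᵥ x) (trvMat w lam *ᵥ y) = Bf x y
  rw [trvMat_mulVec, trvMat_mulVec, Bf_add_left, Bf_add_right, Bf_add_right]
  rw [Bf_smul_left, Bf_smul_left, Bf_smul_right, Bf_smul_right, Bf_self]
  rw [Bf_skew w y]
  ring

lemma sp_step {a b : (Fin n ⊕ Fin n) → F} (hB : Bf a b ≠ 0) :
    ∃ g : ↥(Sp F n), ((g : (Matrix (Fin n ⊕ Fin n) (Fin n ⊕ Fin n) F)ˣ) :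
      Matrix (Fin n ⊕ Fin n) (Fin n ⊕ Fin n) F) *ᵥ a = b := by
  refine ⟨⟨trvU (b - a) (Bf a b)⁻¹, trvU_mem _ _⟩, ?_⟩
  show trvMat (b - a) (Bf a b)⁻¹ *ᵥ a = b
  rw [trvMat_mulVec]
  have h1 : Bf a (b - a) = Bf a b := by
    rw [sub_eq_add_neg, Bf_add_right, Bf_neg_right, Bf_self]
    ring
  rw [h1, inv_mul_cancel₀ hB, one_smul]
  abel

lemma sp_transitive {u v : (Fin n ⊕ Fin n) → F} (h2 : (2:F) ≠ 0) (hu : u ≠ 0) (hv : v ≠ 0) :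
    ∃ g : ↥(Sp F n), ((g : (Matrix (Fin n ⊕ Fin n) (Fin n ⊕ Fin n) F)ˣ) :
      Matrix (Fin n ⊕ Fin n) (Fin n ⊕ Fin n) F) *ᵥ u = v := by
  by_cases hBuv : Bf u v ≠ 0
  · exact sp_step hBuv
  push_neg at hBuv
  by_cases huv : u = v
  · exact ⟨1, by rw [huv]; simp⟩
  -- find z with Bf u z ≠ 0 and Bf z v ≠ 0
  obtain ⟨x', hx'⟩ := Bf_surj_right hu (1 : F)
  obtain ⟨y', hy'⟩ := Bf_surj_left hv (1 : F)
  have hx : Bf u x' ≠ 0 := by rw [hx']; exact one_ne_zero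
  have hy : Bf y' v ≠ 0 := by rw [hy']; exact one_ne_zero
  have key : ∃ z, Bf u z ≠ 0 ∧ Bf z v ≠ 0 := by
    by_cases h1 : Bf x' v ≠ 0
    · exact ⟨x', hx, h1⟩
    by_cases h2' : Bf u y' ≠ 0
    · exact ⟨y', h2', hy⟩
    push_neg at h1 h2'
    refine ⟨x' + y', ?_, ?_⟩
    · rw [Bf_add_right, h2', add_zero]; exact hx
    · rw [Bf_add_left, h1, zero_add]; exact hy
  obtain ⟨z, hz1, hz2⟩ := key
  obtain ⟨g₁, hg₁⟩ := sp_step hz1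
  obtain ⟨g₂, hg₂⟩ := sp_step hz2
  refine ⟨g₂ * g₁, ?_⟩
  have : ((((g₂ * g₁ : ↥(Sp F n)) : (Matrix (Fin n ⊕ Fin n) (Fin n ⊕ Fin n) F)ˣ)) :
      Matrix (Fin n ⊕ Fin n) (Fin n ⊕ Fin n) F)
      = ((g₂ : (Matrix (Fin n ⊕ Fin n) (Fin n ⊕ Fin n) F)ˣ) : Matrix (Fin n ⊕ Fin n) (Fin n ⊕ Fin n) F)
      * ((g₁ : (Matrix (Fin n ⊕ Fin n) (Fin n ⊕ Fin n) F)ˣ) : Matrix (Fin n ⊕ Fin n) (Fin n ⊕ Fin n) F) := rfl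
  rw [this, ← mulVec_mulVec, hg₁, hg₂]

end Transit
open Matrix

set_option linter.unusedSectionVars false
set_option maxHeartbeats 1000000

section Maschke
variable {G : Type} [Group G] [Fintype G] {W : Type} [AddCommGroup W] [Module ℂ W]

lemma maschke_compl (ρ : Representation ℂ G W) {p : Submodule ℂ W} (hp : InvariantUnder ρ p) :
    ∃ q : Submodule ℂ W, IsCompl p q ∧ InvariantUnder ρ q := by
  classical
  obtain ⟨q₀, hq₀⟩ := Submodule.exists_isCompl p
  set pr : W →ₗ[ℂ] W := p.subtype ∘ₗ p.linearProjOfIsCompl q₀ hq₀ with hpr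
  have hpr_mem : ∀ w, pr w ∈ p := fun w => (p.linearProjOfIsCompl q₀ hq₀ w).2
  have hpr_fix : ∀ w ∈ p, pr w = w := by
    intro w hw
    show ((p.linearProjOfIsCompl q₀ hq₀ w : ↥p) : W) = w
    have h1 : p.linearProjOfIsCompl q₀ hq₀ (((⟨w, hw⟩ : ↥p) : W)) = ⟨w, hw⟩ :=
      Submodule.linearProjOfIsCompl_apply_left hq₀ ⟨w, hw⟩
    have h2 : (((⟨w, hw⟩ : ↥p) : W)) = w := rfl
    rw [← h2, h1]
  set P : W →ₗ[ℂ] W := (Fintype.card G : ℂ)⁻¹ • ∑ g : G, ρ g * pr * ρ g⁻¹ with hP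
  have hcard : (Fintype.card G : ℂ) ≠ 0 := Nat.cast_ne_zero.mpr Fintype.card_ne_zero
  have happ : ∀ w, P w = (Fintype.card G : ℂ)⁻¹ • ∑ g : G, ρ g (pr (ρ g⁻¹ w)) := by
    intro w
    rw [hP, LinearMap.smul_apply, LinearMap.sum_apply]
    rfl
  have hmem : ∀ w, P w ∈ p := by
    intro w
    rw [happ]
    exact Submodule.smul_mem _ _ (Submodule.sum_mem _ (fun g _ => hp g _ (hpr_mem _)))
  have hfix : ∀ w ∈ p, P w = w := by
    intro w hw
    rw [happ]
    have hterm : ∀ g : G, ρ g (pr (ρ g⁻¹ w)) = w := by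
      intro g
      rw [hpr_fix _ (hp g⁻¹ w hw)]
      have h3 : ρ g (ρ g⁻¹ w) = (ρ g * ρ g⁻¹) w := rfl
      rw [h3, ← _root_.map_mul, mul_inv_cancel, _root_.map_one, Module.End.one_apply]
    rw [Finset.sum_congr rfl (fun g _ => hterm g), Finset.sum_const, Finset.card_univ,
      ← Nat.cast_smul_eq_nsmul ℂ, smul_smul, inv_mul_cancel₀ hcard, one_smul]
  have hequiv : ∀ h : G, ρ h * P = P * ρ h := by
    intro h
    rw [hP, mul_smul_comm, smul_mul_assoc]
    congr 1
    rw [Finset.mul_sum, Finset.sum_mul]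
    refine Fintype.sum_equiv (Equiv.mulLeft h) _ _ (fun g => ?_)
    simp only [Equiv.coe_mulLeft]
    rw [_root_.mul_inv_rev, _root_.map_mul ρ h g, _root_.map_mul ρ g⁻¹ h⁻¹]
    have hh : ρ h⁻¹ * ρ h = 1 := by rw [← _root_.map_mul, inv_mul_cancel, _root_.map_one]
    simp only [mul_assoc]
    rw [hh, mul_one]
  refine ⟨LinearMap.ker P, ⟨?_, ?_⟩, ?_⟩
  · rw [Submodule.disjoint_def]
    intro x hx1 hx2
    rw [LinearMap.mem_ker] at hx2
    rw [← hfix x hx1, hx2]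
  · rw [codisjoint_iff, eq_top_iff]
    intro w _
    rw [Submodule.mem_sup]
    refine ⟨P w, hmem w, w - P w, ?_, by abel⟩
    rw [LinearMap.mem_ker, map_sub, hfix _ (hmem w), sub_self]
  · intro h w hw
    rw [LinearMap.mem_ker] at hw ⊢
    have : P (ρ h w) = (P * ρ h) w := rfl
    rw [this, ← hequiv h]
    have : (ρ h * P) w = ρ h (P w) := rfl
    rw [this, hw, map_zero]

end Maschke

section Involution
variable {W : Type} [AddCommGroup W] [Module ℂ W]

lemma invol_isCompl (T : Module.End ℂ W) (hT : T * T = 1) :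
    IsCompl (Module.End.eigenspace T 1) (Module.End.eigenspace T (-1)) := by
  have hTT : ∀ x : W, T (T x) = x := fun x => by
    have h : (T * T) x = (1 : Module.End ℂ W) x := by rw [hT]
    simpa using h
  constructor
  · rw [Submodule.disjoint_def]
    intro x hx1 hx2
    rw [Module.End.mem_eigenspace_iff] at hx1 hx2
    rw [one_smul] at hx1
    have h2 : (2:ℂ) • x = 0 := by
      have := hx1.symm.trans hx2
      rw [two_smul]
      nth_rewrite 1 [this]
      module
    rcases smul_eq_zero.mp h2 with h | h
    · norm_num at h
    · exact h
  · rw [codisjoint_iff, eq_top_iff]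
    intro x _
    rw [Submodule.mem_sup]
    refine ⟨(2:ℂ)⁻¹ • (x + T x), ?_, (2:ℂ)⁻¹ • (x - T x), ?_, by module⟩
    · rw [Module.End.mem_eigenspace_iff, LinearMap.map_smul, map_add, hTT, one_smul, add_comm]
    · rw [Module.End.mem_eigenspace_iff, LinearMap.map_smul, map_sub, hTT]
      module

lemma eigenspace_invariant (T S : Module.End ℂ W) (h : S * T = T * S) (c : ℂ) :
    ∀ x ∈ Module.End.eigenspace T c, S x ∈ Module.End.eigenspace T c := by
  intro x hx
  rw [Module.End.mem_eigenspace_iff] at hx ⊢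
  have h1 : T (S x) = (T * S) x := rfl
  rw [h1, ← h]
  have h2 : (S * T) x = S (T x) := rfl
  rw [h2, hx, LinearMap.map_smul]

end Involution

section OmegaBasics
variable {F : Type} [Field F] [Fintype F] {n : ℕ}
  {W : Type} [AddCommGroup W] [Module ℂ W]
  (π : Representation ℂ (Heis F (Fin n ⊕ Fin n) (Jmat F n)) W)
  {ψ : AddChar F ℂ}
  (ω : ↥(Sp F n) →* (W →ₗ[ℂ] W)ˣ)

lemma toRep_eq (g : ↥(Sp F n)) : toRep ω g = ((ω g : (W →ₗ[ℂ] W)ˣ) : W →ₗ[ℂ] W) := rfl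

lemma toRep_mul_inv (g : ↥(Sp F n)) : toRep ω g * toRep ω g⁻¹ = 1 := by
  rw [← _root_.map_mul, mul_inv_cancel, _root_.map_one]

lemma toRep_inv_mul (g : ↥(Sp F n)) : toRep ω g⁻¹ * toRep ω g = 1 := by
  rw [← _root_.map_mul, inv_mul_cancel, _root_.map_one]

lemma omega_pi_conj (hω : IsOscillator π ω) (g : ↥(Sp F n)) (v : (Fin n ⊕ Fin n) → F) :
    (toRep ω g) * π (mkH v 0) * (toRep ω g⁻¹)
      = π (mkH (((g : (Matrix (Fin n ⊕ Fin n) (Fin n ⊕ Fin n) F)ˣ) :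
          Matrix (Fin n ⊕ Fin n) (Fin n ⊕ Fin n) F) *ᵥ v) 0) := by
  have h := hω g (mkH v 0)
  rw [← map_inv ω g] at h
  exact h

lemma omega_pi_conj' (hω : IsOscillator π ω) (g : ↥(Sp F n)) (v : (Fin n ⊕ Fin n) → F) :
    (toRep ω g) * π (mkH v 0)
      = π (mkH (((g : (Matrix (Fin n ⊕ Fin n) (Fin n ⊕ Fin n) F)ˣ) :
          Matrix (Fin n ⊕ Fin n) (Fin n ⊕ Fin n) F) *ᵥ v) 0) * (toRep ω g) := by
  have h := omega_pi_conj π ω hω g v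
  have h2 := congrArg (· * toRep ω g) h
  rw [mul_assoc, toRep_inv_mul, mul_one] at h2
  exact h2

lemma negI_sq : (negI F n) * (negI F n) = 1 := by
  apply Subtype.ext
  show ((-1 : (Matrix (Fin n ⊕ Fin n) (Fin n ⊕ Fin n) F)ˣ) * (-1)) = 1
  simp

lemma negI_inv : (negI F n)⁻¹ = negI F n := by
  rw [inv_eq_iff_mul_eq_one, negI_sq]

lemma negI_central (g : ↥(Sp F n)) : g * negI F n = negI F n * g := by
  apply Subtype.ext
  show (g : (Matrix (Fin n ⊕ Fin n) (Fin n ⊕ Fin n) F)ˣ) * (-1) = (-1) * g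
  simp

lemma negI_coe : (((negI F n : ↥(Sp F n)) : (Matrix (Fin n ⊕ Fin n) (Fin n ⊕ Fin n) F)ˣ) :
    Matrix (Fin n ⊕ Fin n) (Fin n ⊕ Fin n) F) = -1 := by
  show ((-1 : (Matrix (Fin n ⊕ Fin n) (Fin n ⊕ Fin n) F)ˣ) : Matrix (Fin n ⊕ Fin n) (Fin n ⊕ Fin n) F) = -1
  simp

lemma T_sq : toRep ω (negI F n) * toRep ω (negI F n) = 1 := by
  rw [← _root_.map_mul, negI_sq, _root_.map_one]

lemma omega_comm_T (g : ↥(Sp F n)) :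
    toRep ω g * toRep ω (negI F n) = toRep ω (negI F n) * toRep ω g := by
  rw [← _root_.map_mul, ← _root_.map_mul, negI_central]

lemma T_pi_conj (hω : IsOscillator π ω) (v : (Fin n ⊕ Fin n) → F) :
    toRep ω (negI F n) * π (mkH v 0) = π (mkH (-v) 0) * toRep ω (negI F n) := by
  have h := omega_pi_conj' π ω hω (negI F n) v
  rw [negI_coe] at h
  rw [h]
  congr 2
  rw [neg_mulVec, one_mulVec]

end OmegaBasics
open Matrix

set_option linter.unusedSectionVars false
set_option maxHeartbeats 1000000

section Helpers

/-- `mulVec` by a unit matrix, as an equivalence. -/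
def mulVecEquiv {F : Type} [Field F] {n : ℕ} (g : (Matrix (Fin n ⊕ Fin n) (Fin n ⊕ Fin n) F)ˣ) :
    ((Fin n ⊕ Fin n) → F) ≃ ((Fin n ⊕ Fin n) → F) where
  toFun v := (g : Matrix (Fin n ⊕ Fin n) (Fin n ⊕ Fin n) F) *ᵥ v
  invFun v := ((g⁻¹ : (Matrix (Fin n ⊕ Fin n) (Fin n ⊕ Fin n) F)ˣ) :
    Matrix (Fin n ⊕ Fin n) (Fin n ⊕ Fin n) F) *ᵥ v
  left_inv v := by
    show ((g⁻¹ : (Matrix (Fin n ⊕ Fin n) (Fin n ⊕ Fin n) F)ˣ) :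
      Matrix (Fin n ⊕ Fin n) (Fin n ⊕ Fin n) F) *ᵥ ((g : Matrix (Fin n ⊕ Fin n) (Fin n ⊕ Fin n) F) *ᵥ v) = v
    rw [mulVec_mulVec, ← Units.val_mul, inv_mul_cancel, Units.val_one, one_mulVec]
  right_inv v := by
    show (g : Matrix (Fin n ⊕ Fin n) (Fin n ⊕ Fin n) F) *ᵥ
      (((g⁻¹ : (Matrix (Fin n ⊕ Fin n) (Fin n ⊕ Fin n) F)ˣ) :
        Matrix (Fin n ⊕ Fin n) (Fin n ⊕ Fin n) F) *ᵥ v) = v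
    rw [mulVec_mulVec, ← Units.val_mul, mul_inv_cancel, Units.val_one, one_mulVec]

variable {G : Type} [Monoid G] {W : Type} [AddCommGroup W] [Module ℂ W]

lemma invariant_sup {ρ : Representation ℂ G W} {p q : Submodule ℂ W}
    (hp : InvariantUnder ρ p) (hq : InvariantUnder ρ q) : InvariantUnder ρ (p ⊔ q) := by
  intro g w hw
  obtain ⟨y, hy, z, hz, hyz⟩ := Submodule.mem_sup.mp hw
  rw [← hyz, map_add]
  exact Submodule.add_mem _ (Submodule.mem_sup_left (hp g y hy)) (Submodule.mem_sup_right (hq g z hz))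

/-- The projection onto `p` along `q`, as an endomorphism of the ambient space. -/
noncomputable def prj {W : Type} [AddCommGroup W] [Module ℂ W] (p q : Submodule ℂ W)
    (h : IsCompl p q) : W →ₗ[ℂ] W :=
  p.subtype ∘ₗ p.linearProjOfIsCompl q h

lemma prj_mem {p q : Submodule ℂ W} (h : IsCompl p q) (w : W) : prj p q h w ∈ p :=
  (p.linearProjOfIsCompl q h w).2

lemma prj_left {p q : Submodule ℂ W} (h : IsCompl p q) {w : W} (hw : w ∈ p) : prj p q h w = w := by
  show ((p.linearProjOfIsCompl q h w : ↥p) : W) = w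
  have h1 : p.linearProjOfIsCompl q h (((⟨w, hw⟩ : ↥p) : W)) = ⟨w, hw⟩ :=
    Submodule.linearProjOfIsCompl_apply_left h ⟨w, hw⟩
  have h2 : (((⟨w, hw⟩ : ↥p) : W)) = w := rfl
  rw [← h2, h1]

lemma prj_right {p q : Submodule ℂ W} (h : IsCompl p q) {w : W} (hw : w ∈ q) : prj p q h w = 0 := by
  show ((p.linearProjOfIsCompl q h w : ↥p) : W) = 0
  have h1 : p.linearProjOfIsCompl q h (((⟨w, hw⟩ : ↥q) : W)) = 0 :=
    Submodule.linearProjOfIsCompl_apply_right h ⟨w, hw⟩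
  have h2 : (((⟨w, hw⟩ : ↥q) : W)) = w := rfl
  rw [← h2, h1, Submodule.coe_zero]

lemma prj_equivariant (ρ : Representation ℂ G W) {p q : Submodule ℂ W} (h : IsCompl p q)
    (hp : InvariantUnder ρ p) (hq : InvariantUnder ρ q) (g : G) :
    ρ g * prj p q h = prj p q h * ρ g := by
  apply LinearMap.ext
  intro w
  obtain ⟨a, b, ha, hb, hab⟩ := Submodule.codisjoint_iff_exists_add_eq.mp h.codisjoint w
  have hw : w = a + b := hab.symm
  have h1 : prj p q h w = a := by
    rw [hw, map_add, prj_left h ha, prj_right h hb, add_zero]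
  have h2 : prj p q h (ρ g w) = ρ g a := by
    rw [hw, map_add, map_add, prj_left h (hp g a ha), prj_right h (hq g b hb), add_zero]
  show ρ g (prj p q h w) = prj p q h (ρ g w)
  rw [h1, h2]

lemma isCompl_piece {P Q s s' : Submodule ℂ W}
    (hPQ : IsCompl P Q) (hsP : s ≤ P) (hs'P : s' ≤ P)
    (hsup : s ⊔ s' = P) (hdisj : s ⊓ s' = ⊥) : IsCompl s (s' ⊔ Q) := by
  constructor
  · rw [Submodule.disjoint_def]
    intro x hxs hx'
    obtain ⟨y, hy, z, hz, hyz⟩ := Submodule.mem_sup.mp hx'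
    have hzP : z ∈ P := by
      have hz2 : z = x - y := by rw [← hyz]; abel
      rw [hz2]
      exact Submodule.sub_mem _ (hsP hxs) (hs'P hy)
    have hz0 : z = 0 := by
      have hd := hPQ.disjoint
      rw [Submodule.disjoint_def] at hd
      exact hd z hzP hz
    have hxy : x = y := by rw [← hyz, hz0, add_zero]
    have hmem : x ∈ s ⊓ s' := ⟨hxs, hxy ▸ hy⟩
    rw [hdisj] at hmem
    simpa using hmem
  · rw [codisjoint_iff, ← sup_assoc, hsup, ← codisjoint_iff]
    exact hPQ.codisjoint

end Helpers

section Traces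
variable {F : Type} [Field F] [Fintype F] {n : ℕ}
  {W : Type} [AddCommGroup W] [Module ℂ W]
  (π : Representation ℂ (Heis F (Fin n ⊕ Fin n) (Jmat F n)) W)
  {ψ : AddChar F ℂ}

lemma trace_pi_eq_zero (hψ : ψ ≠ 1) (hcc : HasCentralChar π ψ) (h2 : (2:F) ≠ 0)
    {v : (Fin n ⊕ Fin n) → F} (hv : v ≠ 0) :
    LinearMap.trace ℂ W (π (mkH v 0)) = 0 := by
  obtain ⟨t, ht⟩ := AddChar.ne_one_iff.mp hψ
  obtain ⟨w, hw⟩ := Bf_surj_left hv t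
  have hconj := pi_conj π hcc h2 w v
  have hL : LinearMap.trace ℂ W (π (mkH w 0) * π (mkH v 0) * π (mkH (-w) 0))
      = LinearMap.trace ℂ W (π (mkH v 0)) := by
    rw [LinearMap.trace_mul_comm, ← mul_assoc]
    have h1 : π (mkH (-w) 0) * π (mkH w 0) = 1 := by
      have h1' := pi_mul_neg π hcc (-w)
      rwa [neg_neg] at h1'
    rw [h1, one_mul]
  rw [hconj, LinearMap.map_smul, hw] at hL
  have h3 : (ψ t - 1) * LinearMap.trace ℂ W (π (mkH v 0)) = 0 := by
    rw [sub_mul, one_mul]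
    have hL' : ψ t • LinearMap.trace ℂ W (π (mkH v 0)) = LinearMap.trace ℂ W (π (mkH v 0)) := hL
    rw [smul_eq_mul] at hL'
    rw [hL']
    ring
  rcases mul_eq_zero.mp h3 with h | h
  · exact absurd (by linear_combination h : ψ t = 1) ht
  · exact h

lemma trace_Qbig [Module.Finite ℂ W] (hψ : ψ ≠ 1) (hcc : HasCentralChar π ψ) (h2 : (2:F) ≠ 0) :
    LinearMap.trace ℂ W (∑ v : (Fin n ⊕ Fin n) → F, π (mkH v 0)) = (Module.finrank ℂ W : ℂ) := by
  classical
  rw [map_sum]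
  rw [Finset.sum_eq_single (0 : (Fin n ⊕ Fin n) → F)]
  · rw [pi_zero_eq_one, LinearMap.trace_one]
  · intro v _ hv
    exact trace_pi_eq_zero π hψ hcc h2 hv
  · intro h
    exact absurd (Finset.mem_univ _) h

lemma Bf_zero_right (x : (Fin n ⊕ Fin n) → F) : Bf x (0 : (Fin n ⊕ Fin n) → F) = 0 := by
  rw [Bf, mulVec_zero, dotProduct_zero]

lemma Qbig_sq (hψ : ψ ≠ 1) (hcc : HasCentralChar π ψ) (h2 : (2:F) ≠ 0) :
    (∑ v : (Fin n ⊕ Fin n) → F, π (mkH v 0)) * (∑ v : (Fin n ⊕ Fin n) → F, π (mkH v 0))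
      = (Fintype.card ((Fin n ⊕ Fin n) → F) : ℂ) • 1 := by
  classical
  rw [Finset.sum_mul]
  have hrow : ∀ v : (Fin n ⊕ Fin n) → F, v ∈ Finset.univ →
      π (mkH v 0) * (∑ u : (Fin n ⊕ Fin n) → F, π (mkH u 0))
        = ∑ w : (Fin n ⊕ Fin n) → F, ψ (Bf v ((2:F)⁻¹ • w)) • π (mkH w 0) := by
    intro v _
    rw [Finset.mul_sum]
    refine Fintype.sum_equiv (Equiv.addLeft v) _ _ (fun u => ?_)
    rw [pi_mul π hcc]
    simp only [Equiv.coe_addLeft]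
    congr 1
    rw [Bf_smul_right, Bf_add_right, Bf_self]
    ring_nf
  rw [Finset.sum_congr rfl hrow, Finset.sum_comm]
  have hcol : ∀ w : (Fin n ⊕ Fin n) → F, w ∈ Finset.univ →
      ∑ v : (Fin n ⊕ Fin n) → F, ψ (Bf v ((2:F)⁻¹ • w)) • π (mkH w 0)
        = (∑ v : (Fin n ⊕ Fin n) → F, ψ (Bf v ((2:F)⁻¹ • w))) • π (mkH w 0) := by
    intro w _
    rw [Finset.sum_smul]
  rw [Finset.sum_congr rfl hcol]
  rw [Finset.sum_eq_single (0 : (Fin n ⊕ Fin n) → F)]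
  · have hz : ∀ v : (Fin n ⊕ Fin n) → F, ψ (Bf v ((2:F)⁻¹ • (0 : (Fin n ⊕ Fin n) → F))) = 1 := by
      intro v
      rw [smul_zero, Bf_zero_right, AddChar.map_zero_eq_one]
    rw [Finset.sum_congr rfl (fun v _ => hz v), Finset.sum_const, Finset.card_univ, pi_zero_eq_one]
    simp
  · intro w _ hw
    have hne : (2:F)⁻¹ • w ≠ 0 := smul_ne_zero (inv_ne_zero h2) hw
    rw [sum_psi_Bf hψ hne, zero_smul]
  · intro h
    exact absurd (Finset.mem_univ _) h

lemma T_eq_smul_Qbig (hcc : HasCentralChar π ψ) (h2 : (2:F) ≠ 0)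
    (bb : Module.Basis ((Fin n ⊕ Fin n) → F) ℂ (W →ₗ[ℂ] W)) (hbb : ∀ v, bb v = π (mkH v 0))
    (T : W →ₗ[ℂ] W) (hTc : ∀ u, T * π (mkH u 0) = π (mkH (-u) 0) * T) :
    T = (bb.repr T 0) • ∑ v : (Fin n ⊕ Fin n) → F, π (mkH v 0) := by
  classical
  set c : ((Fin n ⊕ Fin n) → F) → ℂ := fun v => bb.repr T v with hc
  have hTsum : T = ∑ v : (Fin n ⊕ Fin n) → F, c v • π (mkH v 0) := by
    conv_lhs => rw [← bb.sum_repr T]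
    refine Finset.sum_congr rfl (fun v _ => by rw [hbb])
  have hstep : ∀ u w : (Fin n ⊕ Fin n) → F, c (w - u) = c (w + u) := by
    intro u w₀
    have hL : T * π (mkH u 0)
        = ∑ w' : (Fin n ⊕ Fin n) → F, ((c (w' - u) * ψ ((2:F)⁻¹ * Bf w' u)) • bb w') := by
      conv_lhs => rw [hTsum]
      rw [Finset.sum_mul]
      refine Fintype.sum_equiv (Equiv.addRight u) _ _ (fun v => ?_)
      rw [smul_mul_assoc, pi_mul π hcc]
      simp only [Equiv.coe_addRight]
      rw [hbb, smul_smul]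
      have e1 : c (v + u - u) = c v := by rw [add_sub_cancel_right]
      have e2 : Bf (v + u) u = Bf v u := by rw [Bf_add_left, Bf_self, add_zero]
      rw [e1, e2]
    have hR : π (mkH (-u) 0) * T
        = ∑ w' : (Fin n ⊕ Fin n) → F, ((c (w' + u) * ψ ((2:F)⁻¹ * Bf w' u)) • bb w') := by
      conv_lhs => rw [hTsum]
      rw [Finset.mul_sum]
      refine Fintype.sum_equiv (Equiv.addLeft (-u)) _ _ (fun v => ?_)
      rw [mul_smul_comm, pi_mul π hcc]
      simp only [Equiv.coe_addLeft]
      rw [hbb, smul_smul]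
      have e1 : c (-u + v + u) = c v := by
        congr 1
        abel
      have e2 : Bf (-u) v = Bf (-u + v) u := by
        have e3 : Bf (-u + v) u = Bf v u := by
          rw [Bf_add_left, Bf_neg_left, Bf_self]
          ring
        rw [e3, Bf_neg_left, Bf_skew u v]
        ring
      rw [e1, e2]
    have heq := hTc u
    rw [hL, hR] at heq
    have hfun : (fun w' => c (w' - u) * ψ ((2:F)⁻¹ * Bf w' u))
        = (fun w' => c (w' + u) * ψ ((2:F)⁻¹ * Bf w' u)) := by
      have e1 := Module.Basis.repr_sum_self bb (fun w' => c (w' - u) * ψ ((2:F)⁻¹ * Bf w' u))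
      have e2 := Module.Basis.repr_sum_self bb (fun w' => c (w' + u) * ψ ((2:F)⁻¹ * Bf w' u))
      rw [← e1, ← e2, heq]
    have hfw := congrFun hfun w₀
    exact mul_right_cancel₀ (psi_ne_zero ψ _) hfw
  have hconst : ∀ v : (Fin n ⊕ Fin n) → F, c v = c 0 := by
    intro v
    have h21 : ((2:F)⁻¹ + (2:F)⁻¹) = 1 := by
      field_simp
      norm_num
    have hv1 : ((2:F)⁻¹ • v) - ((2:F)⁻¹ • v) = (0 : (Fin n ⊕ Fin n) → F) := sub_self _
    have hv2 : ((2:F)⁻¹ • v) + ((2:F)⁻¹ • v) = v := by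
      rw [← add_smul, h21, one_smul]
    have := hstep ((2:F)⁻¹ • v) ((2:F)⁻¹ • v)
    rw [hv1, hv2] at this
    exact this.symm
  have hfin : T = c 0 • ∑ v : (Fin n ⊕ Fin n) → F, π (mkH v 0) := by
    conv_lhs => rw [hTsum]
    rw [Finset.smul_sum]
    exact Finset.sum_congr rfl (fun v _ => by rw [hconst v])
  exact hfin

end Traces

/-- The oscillator representation decomposes as the direct sum of the
`(+1)`- and `(-1)`-eigenspaces of `ω(-I)`, each of which is an irreducible
subrepresentation; their dimensions are `(q^n + 1)/2` and `(q^n - 1)/2` in some order. -/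
theorem oscillator_decomposition
    (F : Type) [Field F] [Fintype F] (hodd : Odd (Fintype.card F))
    (n : ℕ) (hn : 0 < n)
    (W : Type) [AddCommGroup W] [Module ℂ W]
    (π : Representation ℂ (Heis F (Fin n ⊕ Fin n) (Jmat F n)) W)
    (hirr : IsIrredRep π)
    (ψ : AddChar F ℂ) (hψ : ψ ≠ 1) (hcc : HasCentralChar π ψ)
    (ω : ↥(Sp F n) →* (W →ₗ[ℂ] W)ˣ) (hω : IsOscillator π ω) :
    IsCompl (Module.End.eigenspace ((toRep ω) (negI F n)) 1)
        (Module.End.eigenspace ((toRep ω) (negI F n)) (-1)) ∧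
    IsIrreducibleSubrep (toRep ω) (Module.End.eigenspace ((toRep ω) (negI F n)) 1) ∧
    IsIrreducibleSubrep (toRep ω) (Module.End.eigenspace ((toRep ω) (negI F n)) (-1)) ∧
    ((Module.finrank ℂ ↥(Module.End.eigenspace ((toRep ω) (negI F n)) 1)
          = (Fintype.card F ^ n + 1) / 2 ∧
      Module.finrank ℂ ↥(Module.End.eigenspace ((toRep ω) (negI F n)) (-1))
          = (Fintype.card F ^ n - 1) / 2) ∨
     (Module.finrank ℂ ↥(Module.End.eigenspace ((toRep ω) (negI F n)) 1)
          = (Fintype.card F ^ n - 1) / 2 ∧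
      Module.finrank ℂ ↥(Module.End.eigenspace ((toRep ω) (negI F n)) (-1))
          = (Fintype.card F ^ n + 1) / 2)) := by
  classical
  have h2 : (2:F) ≠ 0 := two_ne_zero_of_odd_card hodd
  haveI hW : Nontrivial W := hirr.1
  haveI hfin : Module.Finite ℂ W := module_finite_of_irr π hψ hcc h2 hirr
  have hdim : Module.finrank ℂ W = Fintype.card F ^ n := finrank_W_eq π hψ hcc h2 hirr
  have hcV : Fintype.card ((Fin n ⊕ Fin n) → F) = Module.finrank ℂ (W →ₗ[ℂ] W) := by
    rw [Module.finrank_linearMap, hdim, Fintype.card_fun, Fintype.card_sum, Fintype.card_fin,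
      ← pow_add]
  have hind := pi_indep π hψ hcc h2 hW
  let bb : Module.Basis ((Fin n ⊕ Fin n) → F) ℂ (W →ₗ[ℂ] W) :=
    basisOfLinearIndependentOfCardEqFinrank hind hcV
  have hbb : ∀ v, bb v = π (mkH v 0) := by
    intro v
    exact congrFun (coe_basisOfLinearIndependentOfCardEqFinrank hind hcV) v
  set T : Module.End ℂ W := toRep ω (negI F n) with hTdef
  have hTsq : T * T = 1 := T_sq ω
  set Wp := Module.End.eigenspace T 1 with hWpdef
  set Wm := Module.End.eigenspace T (-1) with hWmdef
  have hcompl : IsCompl Wp Wm := invol_isCompl T hTsq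
  have hinvp : InvariantUnder (toRep ω) Wp := fun g w hw =>
    eigenspace_invariant T (toRep ω g) (omega_comm_T ω g) 1 w hw
  have hinvm : InvariantUnder (toRep ω) Wm := fun g w hw =>
    eigenspace_invariant T (toRep ω g) (omega_comm_T ω g) (-1) w hw
  -- a nonzero vector
  have hv₁ : (Pi.single (Sum.inl (⟨0, hn⟩ : Fin n)) (1:F) : (Fin n ⊕ Fin n) → F) ≠ 0 := by
    intro h
    have h' := congrFun h (Sum.inl (⟨0, hn⟩ : Fin n))
    rw [Pi.single_eq_same] at h'
    exact one_ne_zero h'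
  -- T is not a scalar
  have hTc : ∀ u, T * π (mkH u 0) = π (mkH (-u) 0) * T := T_pi_conj π ω hω
  have hscal : ∀ cι : ℂ, cι ≠ 0 → (∀ x : W, T x = cι • x) → False := by
    intro cι hcne hTx
    set v₁ : (Fin n ⊕ Fin n) → F := Pi.single (Sum.inl (⟨0, hn⟩ : Fin n)) (1:F) with hv₁def
    have hT1 : cι • π (mkH v₁ 0) = cι • π (mkH (-v₁) 0) := by
      apply LinearMap.ext
      intro x
      have h2' : T (π (mkH v₁ 0) x) = π (mkH (-v₁) 0) (T x) := by
        have h1 := congrArg (fun (S : Module.End ℂ W) => S x) (hTc v₁)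
        simpa using h1
      rw [hTx, hTx, LinearMap.map_smul] at h2'
      simpa using h2'
    have h4 : π (mkH v₁ 0) = π (mkH (-v₁) 0) :=
      smul_right_injective (W →ₗ[ℂ] W) hcne hT1
    have h5 : v₁ = -v₁ := hind.injective h4
    have h6 := congrFun h5 (Sum.inl (⟨0, hn⟩ : Fin n))
    rw [hv₁def, Pi.neg_apply, Pi.single_eq_same] at h6
    exact h2 (by linear_combination h6)
  have hWm_ne : Wm ≠ ⊥ := by
    intro hbot
    refine hscal 1 one_ne_zero (fun x => ?_)
    obtain ⟨a, b, ha, hb, hab⟩ := Submodule.codisjoint_iff_exists_add_eq.mp hcompl.codisjoint x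
    rw [hbot] at hb
    have hb0 : b = 0 := by simpa using hb
    have ha' : T a = a := by
      have := Module.End.mem_eigenspace_iff.mp ha
      rwa [one_smul] at this
    rw [← hab, hb0, add_zero, ha', one_smul]
  have hWp_ne : Wp ≠ ⊥ := by
    intro hbot
    refine hscal (-1) (by norm_num) (fun x => ?_)
    obtain ⟨a, b, ha, hb, hab⟩ := Submodule.codisjoint_iff_exists_add_eq.mp hcompl.codisjoint x
    rw [hbot] at ha
    have ha0 : a = 0 := by simpa using ha
    have hb' : T b = -b := by
      have := Module.End.mem_eigenspace_iff.mp hb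
      rwa [neg_smul, one_smul] at this
    rw [← hab, ha0, zero_add, hb', neg_smul, one_smul]
  -- commutant is spanned by 1 and Pbig
  set Pbig : Module.End ℂ W :=
    ∑ v ∈ Finset.univ.erase (0 : (Fin n ⊕ Fin n) → F), π (mkH v 0) with hPbigdef
  have hcomm_span : ∀ X : Module.End ℂ W,
      (∀ g : ↥(Sp F n), toRep ω g * X = X * toRep ω g) →
      ∃ a b : ℂ, X = a • 1 + b • Pbig := by
    intro X hX
    set cX : ((Fin n ⊕ Fin n) → F) → ℂ := fun v => bb.repr X v with hcXdef
    have hXsum : X = ∑ v : (Fin n ⊕ Fin n) → F, cX v • π (mkH v 0) := by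
      conv_lhs => rw [← bb.sum_repr X]
      exact Finset.sum_congr rfl (fun v _ => by rw [hbb])
    have hfix : ∀ (g : ↥(Sp F n)) (v : (Fin n ⊕ Fin n) → F),
        cX (((g : (Matrix (Fin n ⊕ Fin n) (Fin n ⊕ Fin n) F)ˣ) :
          Matrix (Fin n ⊕ Fin n) (Fin n ⊕ Fin n) F) *ᵥ v) = cX v := by
      intro g v
      set e := mulVecEquiv (g : (Matrix (Fin n ⊕ Fin n) (Fin n ⊕ Fin n) F)ˣ) with hedef
      have h1 : toRep ω g * X * toRep ω g⁻¹ = X := by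
        rw [hX g, mul_assoc, toRep_mul_inv, mul_one]
      have h2' : toRep ω g * X * toRep ω g⁻¹
          = ∑ w : (Fin n ⊕ Fin n) → F, cX (e.symm w) • bb w := by
        conv_lhs => rw [hXsum]
        rw [mul_assoc, Finset.sum_mul, Finset.mul_sum]
        refine Fintype.sum_equiv e _ _ (fun u => ?_)
        rw [smul_mul_assoc, mul_smul_comm]
        have h3 := omega_pi_conj π ω hω g u
        rw [mul_assoc] at h3
        rw [h3, hbb, Equiv.symm_apply_apply]
        rfl
      rw [h2'] at h1
      have h4 : ∀ w, cX (e.symm w) = cX w := by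
        intro w
        have e1 := Module.Basis.repr_sum_self bb (fun w => cX (e.symm w))
        calc cX (e.symm w) = bb.repr (∑ w' : (Fin n ⊕ Fin n) → F, cX (e.symm w') • bb w') w := by
              rw [e1]
          _ = bb.repr X w := by rw [h1]
          _ = cX w := rfl
      have h5 := h4 (e v)
      rw [Equiv.symm_apply_apply] at h5
      exact h5.symm
    set v₁ : (Fin n ⊕ Fin n) → F := Pi.single (Sum.inl (⟨0, hn⟩ : Fin n)) (1:F) with hv₁def
    have hconst : ∀ v : (Fin n ⊕ Fin n) → F, v ≠ 0 → cX v = cX v₁ := by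
      intro v hv
      obtain ⟨g, hg⟩ := sp_transitive h2 hv₁ hv
      rw [← hg, hfix g v₁]
    refine ⟨cX 0, cX v₁, ?_⟩
    calc X = ∑ v : (Fin n ⊕ Fin n) → F, cX v • π (mkH v 0) := hXsum
      _ = cX 0 • π (mkH (0 : (Fin n ⊕ Fin n) → F) 0)
          + ∑ v ∈ Finset.univ.erase (0 : (Fin n ⊕ Fin n) → F), cX v • π (mkH v 0) :=
        (Finset.add_sum_erase _ _ (Finset.mem_univ 0)).symm
      _ = cX 0 • 1 + cX v₁ • Pbig := by
        rw [pi_zero_eq_one]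
        congr 1
        rw [hPbigdef, Finset.smul_sum]
        refine Finset.sum_congr rfl (fun v hvmem => ?_)
        rw [hconst v (Finset.ne_of_mem_erase hvmem)]
  -- no three independent commuting operators
  have hcomm_three : ∀ (f1 f2 f3 : Module.End ℂ W),
      (∀ g : ↥(Sp F n), toRep ω g * f1 = f1 * toRep ω g) →
      (∀ g : ↥(Sp F n), toRep ω g * f2 = f2 * toRep ω g) →
      (∀ g : ↥(Sp F n), toRep ω g * f3 = f3 * toRep ω g) →
      LinearIndependent ℂ ![f1, f2, f3] → False := by
    intro f1 f2 f3 hf1 hf2 hf3 hli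
    set C := Submodule.span ℂ (Set.range ![(1 : Module.End ℂ W), Pbig]) with hCdef
    have hmemC : ∀ f : Module.End ℂ W,
        (∀ g : ↥(Sp F n), toRep ω g * f = f * toRep ω g) → f ∈ C := by
      intro f hf
      obtain ⟨a, b, hab⟩ := hcomm_span f hf
      rw [hab]
      exact Submodule.add_mem _
        (Submodule.smul_mem _ _ (Submodule.subset_span ⟨0, rfl⟩))
        (Submodule.smul_mem _ _ (Submodule.subset_span ⟨1, rfl⟩))
    have hCrank : Module.finrank ℂ ↥C ≤ 2 := by
      haveI : Fintype ↑(Set.range ![(1 : Module.End ℂ W), Pbig]) := (Set.finite_range _).fintype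
      have h5 := finrank_span_le_card (R := ℂ) (Set.range ![(1 : Module.End ℂ W), Pbig])
      refine h5.trans ?_
      rw [Set.toFinset_card]
      exact (Fintype.card_range_le _).trans (by simp)
    set fam : Fin 3 → ↥C := fun i =>
      ⟨![f1, f2, f3] i, by
        fin_cases i
        · exact hmemC f1 hf1
        · exact hmemC f2 hf2
        · exact hmemC f3 hf3⟩ with hfam
    have hlif : LinearIndependent ℂ fam := by
      apply LinearIndependent.of_comp C.subtype
      have hcomp : (⇑C.subtype ∘ fam) = ![f1, f2, f3] := by
        funext i
        fin_cases i <;> rfl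
      rw [hcomp]
      exact hli
    have h6 := hlif.fintype_card_le_finrank
    rw [Fintype.card_fin] at h6
    omega
  haveI hSpFin : Fintype ↥(Sp F n) := Fintype.ofFinite _
  -- irreducibility of an invariant complemented pair
  have hirrsub : ∀ (P Q : Submodule ℂ W), IsCompl P Q → InvariantUnder (toRep ω) P →
      InvariantUnder (toRep ω) Q → P ≠ ⊥ → Q ≠ ⊥ → IsIrreducibleSubrep (toRep ω) P := by
    intro P Q hPQ hPinv hQinv hPne hQne
    refine ⟨hPinv, hPne, ?_⟩
    intro s hsP hsinv
    by_contra hcon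
    push_neg at hcon
    obtain ⟨hs_ne_bot, hs_ne_P⟩ := hcon
    obtain ⟨t, hst, htinv⟩ := maschke_compl (toRep ω) hsinv
    set s' := P ⊓ t with hs'def
    have hs'inv : InvariantUnder (toRep ω) s' := fun g w hw => ⟨hPinv g w hw.1, htinv g w hw.2⟩
    have hsup : s ⊔ s' = P := by
      apply le_antisymm
      · exact sup_le hsP inf_le_left
      · intro x hx
        obtain ⟨y, z, hy, hz, hyz⟩ := Submodule.codisjoint_iff_exists_add_eq.mp hst.codisjoint x
        have hzP : z ∈ P := by
          have hz2 : z = x - y := by rw [← hyz]; abel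
          rw [hz2]
          exact Submodule.sub_mem _ hx (hsP hy)
        rw [← hyz]
        exact Submodule.add_mem _ (Submodule.mem_sup_left hy)
          (Submodule.mem_sup_right ⟨hzP, hz⟩)
    have hdisj : s ⊓ s' = ⊥ := by
      have hle : s ⊓ s' ≤ s ⊓ t := inf_le_inf_left s inf_le_right
      rw [← le_bot_iff]
      refine le_trans hle ?_
      rw [le_bot_iff, ← disjoint_iff]
      exact hst.disjoint
    have hs'ne : s' ≠ ⊥ := fun h => hs_ne_P (by rw [← hsup, h, sup_bot_eq])
    have hc1 : IsCompl s (s' ⊔ Q) := isCompl_piece hPQ hsP inf_le_left hsup hdisj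
    have hc2 : IsCompl s' (s ⊔ Q) := isCompl_piece hPQ inf_le_left hsP
      (by rw [sup_comm]; exact hsup) (by rw [inf_comm]; exact hdisj)
    have hc3 : IsCompl Q P := hPQ.symm
    have hinv1 : InvariantUnder (toRep ω) (s' ⊔ Q) := invariant_sup hs'inv hQinv
    have hinv2 : InvariantUnder (toRep ω) (s ⊔ Q) := invariant_sup hsinv hQinv
    have hcm1 := prj_equivariant (toRep ω) hc1 hsinv hinv1
    have hcm2 := prj_equivariant (toRep ω) hc2 hs'inv hinv2
    have hcm3 := prj_equivariant (toRep ω) hc3 hQinv hPinv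
    obtain ⟨a, has, hane⟩ := Submodule.ne_bot_iff s |>.mp hs_ne_bot
    obtain ⟨b, hbs', hbne⟩ := Submodule.ne_bot_iff s' |>.mp hs'ne
    obtain ⟨c0, hc0Q, hc0ne⟩ := Submodule.ne_bot_iff Q |>.mp hQne
    have hli : LinearIndependent ℂ ![prj s (s' ⊔ Q) hc1, prj s' (s ⊔ Q) hc2, prj Q P hc3] := by
      rw [Fintype.linearIndependent_iff]
      intro gco hsum
      have happ : ∀ x : W, gco 0 • (prj s (s' ⊔ Q) hc1) x + gco 1 • (prj s' (s ⊔ Q) hc2) x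
          + gco 2 • (prj Q P hc3) x = 0 := by
        intro x
        have h7 := congrArg (fun (S : Module.End ℂ W) => S x) hsum
        rw [Fin.sum_univ_three] at h7
        simpa using h7
      have hg0 : gco 0 = 0 := by
        have h8 := happ a
        rw [prj_left hc1 has, prj_right hc2 (Submodule.mem_sup_left has),
          prj_right hc3 (hsP has), smul_zero, smul_zero, add_zero, add_zero] at h8
        rcases smul_eq_zero.mp h8 with h | h
        · exact h
        · exact absurd h hane
      have hg1 : gco 1 = 0 := by
        have h8 := happ b
        rw [prj_right hc1 (Submodule.mem_sup_left hbs'), prj_left hc2 hbs',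
          prj_right hc3 (inf_le_left (a := P) (b := t) hbs'), smul_zero, smul_zero,
          zero_add, add_zero] at h8
        rcases smul_eq_zero.mp h8 with h | h
        · exact h
        · exact absurd h hbne
      have hg2 : gco 2 = 0 := by
        have h8 := happ c0
        rw [prj_right hc1 (Submodule.mem_sup_right hc0Q),
          prj_right hc2 (Submodule.mem_sup_right hc0Q), prj_left hc3 hc0Q,
          smul_zero, smul_zero, zero_add, zero_add] at h8
        rcases smul_eq_zero.mp h8 with h | h
        · exact h
        · exact absurd h hc0ne
      intro i
      fin_cases i
      · exact hg0
      · exact hg1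
      · exact hg2
    exact hcomm_three _ _ _ hcm1 hcm2 hcm3 hli
  have hirr1 : IsIrreducibleSubrep (toRep ω) Wp :=
    hirrsub Wp Wm hcompl hinvp hinvm hWp_ne hWm_ne
  have hirr2 : IsIrreducibleSubrep (toRep ω) Wm :=
    hirrsub Wm Wp hcompl.symm hinvm hinvp hWm_ne hWp_ne
  -- dimensions
  have hsumd : Module.finrank ℂ ↥Wp + Module.finrank ℂ ↥Wm = Fintype.card F ^ n := by
    rw [Submodule.finrank_add_eq_of_isCompl hcompl, hdim]
  set csc := bb.repr T 0 with hcscdef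
  have hTQ : T = csc • ∑ v : (Fin n ⊕ Fin n) → F, π (mkH v 0) :=
    T_eq_smul_Qbig π hcc h2 bb hbb T hTc
  have hQsq := Qbig_sq π hψ hcc h2
  have hone_ne : (1 : Module.End ℂ W) ≠ 0 := by
    obtain ⟨x, hx⟩ := exists_ne (0 : W)
    intro h
    have h' := congrArg (fun (S : Module.End ℂ W) => S x) h
    simp only [Module.End.one_apply, LinearMap.zero_apply] at h'
    exact hx h'
  have hscalar : csc * csc * (Fintype.card ((Fin n ⊕ Fin n) → F) : ℂ) = 1 := by
    have h1 : T * T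
        = (csc * csc * (Fintype.card ((Fin n ⊕ Fin n) → F) : ℂ)) • (1 : Module.End ℂ W) := by
      rw [hTQ, smul_mul_assoc, mul_smul_comm, hQsq, smul_smul, smul_smul, mul_assoc]
    rw [hTsq] at h1
    have h2' : (csc * csc * (Fintype.card ((Fin n ⊕ Fin n) → F) : ℂ)) • (1 : Module.End ℂ W)
        = (1:ℂ) • (1 : Module.End ℂ W) := by rw [← h1, one_smul]
    exact smul_left_injective ℂ hone_ne h2'
  have htrT : LinearMap.trace ℂ W T = csc * ((Fintype.card F ^ n : ℕ) : ℂ) := by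
    rw [hTQ, LinearMap.map_smul, trace_Qbig π hψ hcc h2, hdim, smul_eq_mul]
  have htr2 : (LinearMap.trace ℂ W T) * (LinearMap.trace ℂ W T) = 1 := by
    rw [htrT]
    have hcard2 : ((Fintype.card F ^ n : ℕ) : ℂ) * ((Fintype.card F ^ n : ℕ) : ℂ)
        = (Fintype.card ((Fin n ⊕ Fin n) → F) : ℂ) := by
      rw [← Nat.cast_mul]
      congr 1
      rw [Fintype.card_fun, Fintype.card_sum, Fintype.card_fin, ← pow_add]
    calc csc * ((Fintype.card F ^ n : ℕ) : ℂ) * (csc * ((Fintype.card F ^ n : ℕ) : ℂ))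
        = csc * csc * (((Fintype.card F ^ n : ℕ) : ℂ) * ((Fintype.card F ^ n : ℕ) : ℂ)) := by
          ring
      _ = 1 := by rw [hcard2, hscalar]
  have htrd : LinearMap.trace ℂ W T
      = ((Module.finrank ℂ ↥Wp : ℕ) : ℂ) - ((Module.finrank ℂ ↥Wm : ℕ) : ℂ) := by
    set e : (↥Wp × ↥Wm) ≃ₗ[ℂ] W := Submodule.prodEquivOfIsCompl Wp Wm hcompl with hedef
    have happly : ∀ (y : ↥Wp) (z : ↥Wm), e (y, z) = (y : W) + (z : W) := by
      intro y z
      have hco := Submodule.coe_prodEquivOfIsCompl Wp Wm hcompl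
      calc e (y, z) = (↑e : ↥Wp × ↥Wm →ₗ[ℂ] W) (y, z) := rfl
        _ = (Wp.subtype.coprod Wm.subtype) (y, z) := by rw [hco]
        _ = (y : W) + (z : W) := rfl
    set f : (↥Wp × ↥Wm) →ₗ[ℂ] (↥Wp × ↥Wm) :=
      LinearMap.prodMap (LinearMap.id : ↥Wp →ₗ[ℂ] ↥Wp) (-LinearMap.id : ↥Wm →ₗ[ℂ] ↥Wm)
      with hfdef
    have hTe : T = e.conj f := by
      apply LinearMap.ext
      intro x
      obtain ⟨a, b, ha, hb, hab⟩ := Submodule.codisjoint_iff_exists_add_eq.mp hcompl.codisjoint x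
      have ha' : T a = a := by
        have h9 := Module.End.mem_eigenspace_iff.mp ha
        rwa [one_smul] at h9
      have hb' : T b = -b := by
        have h9 := Module.End.mem_eigenspace_iff.mp hb
        rwa [neg_smul, one_smul] at h9
      have hTx : T x = a - b := by
        rw [← hab, map_add, ha', hb']
        abel
      have hce : e (⟨a, ha⟩, ⟨b, hb⟩) = x := by rw [happly]; exact hab
      have hsymm : e.symm x = (⟨a, ha⟩, ⟨b, hb⟩) := by rw [← hce, LinearEquiv.symm_apply_apply]
      have hconj : (e.conj f) x = e (f (e.symm x)) := rfl
      rw [hconj, hsymm]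
      have hfp : f ((⟨a, ha⟩ : ↥Wp), (⟨b, hb⟩ : ↥Wm)) = (⟨a, ha⟩, -(⟨b, hb⟩ : ↥Wm)) := rfl
      rw [hfp, happly, hTx]
      have : ((-(⟨b, hb⟩ : ↥Wm) : ↥Wm) : W) = -b := rfl
      rw [this]
      abel
    rw [hTe, LinearMap.trace_conj', hfdef, LinearMap.trace_prodMap', map_neg, LinearMap.trace_id,
      LinearMap.trace_id]
    ring
  have hZ : ((Module.finrank ℂ ↥Wp : ℤ) - (Module.finrank ℂ ↥Wm : ℤ))
      * ((Module.finrank ℂ ↥Wp : ℤ) - (Module.finrank ℂ ↥Wm : ℤ)) = 1 := by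
    have hC : (((Module.finrank ℂ ↥Wp : ℤ) - (Module.finrank ℂ ↥Wm : ℤ) : ℤ) : ℂ)
        * (((Module.finrank ℂ ↥Wp : ℤ) - (Module.finrank ℂ ↥Wm : ℤ) : ℤ) : ℂ) = 1 := by
      push_cast
      rw [← htrd]
      exact htr2
    exact_mod_cast hC
  have hcase := Int.isUnit_iff.mp (IsUnit.of_mul_eq_one _ hZ)
  refine ⟨hcompl, hirr1, hirr2, ?_⟩
  rcases hcase with h | h
  · left
    constructor <;> omega
  · right
    constructor <;> omega
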